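/- arXiv:2002.07673 — 9 statements merged into one kernel-verified Lean document; each statement's English description precedes it below -/
import Mathlib

section
/- Let A be a p×p entrywise nonnegative real matrix whose spectral radius is strictly less than 1, and let B be a p×q entrywise nonnegative real matrix. Then for every complex number z with |z| = 1 the matrix z·I − A (with A viewed as a complex matrix) is invertible, and for every vector d ∈ ℂ^q and every index i, the i-th entry of (z·I − A)⁻¹ B d satisfies |((z·I − A)⁻¹ B d)_i| ≤ ((I − A)⁻¹ B |d|)_i, where |d| denotes the vector of absolute values of the entries of d and (I − A)⁻¹ B |d| is computed over the reals. -/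
open Matrix Filter Topology
open scoped NNReal

attribute [local instance] Matrix.linftyOpNormedRing Matrix.linftyOpNormedAlgebra
  Matrix.linftyOpNormedAddCommGroup Matrix.linftyOpNormedSpace

section aux

variable {m n α : Type*} [Fintype m] [Fintype n]

/-- geometric series for an element with summable norms of powers -/
private lemma geom_inv {R : Type*} [NormedRing R] [CompleteSpace R] {a : R}
    (h : Summable fun k : ℕ => ‖a ^ k‖) :
    HasSum (fun k : ℕ => a ^ k) (∑' k : ℕ, a ^ k) ∧ (1 - a) * (∑' k : ℕ, a ^ k) = 1 := by
  have hs : Summable fun k : ℕ => a ^ k := h.of_norm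
  refine ⟨hs.hasSum, ?_⟩
  have h1 : Tendsto (fun N => ∑ i ∈ Finset.range N, a ^ i) atTop (𝓝 (∑' k : ℕ, a ^ k)) :=
    hs.hasSum.tendsto_sum_nat
  have h2 : Tendsto (fun N => (1 - a) * ∑ i ∈ Finset.range N, a ^ i) atTop
      (𝓝 ((1 - a) * ∑' k : ℕ, a ^ k)) := h1.const_mul _
  have h4 : Tendsto (fun N : ℕ => a ^ N) atTop (𝓝 0) := by
    rw [tendsto_zero_iff_norm_tendsto_zero]
    exact h.tendsto_atTop_zero
  have h5 : Tendsto (fun N : ℕ => 1 - a ^ N) atTop (𝓝 (1 - 0)) := tendsto_const_nhds.sub h4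
  rw [sub_zero] at h5
  simp_rw [mul_neg_geom_sum] at h2
  exact tendsto_nhds_unique h2 h5

open ENNReal in
private lemma summable_norm_pow_of_sr {R : Type*} [NormedRing R] [NormedAlgebra ℂ R]
    [CompleteSpace R] {a : R} (h : spectralRadius ℂ a < 1) :
    Summable fun k : ℕ => ‖a ^ k‖ := by
  obtain ⟨ρ, hρ1, hρ2⟩ := exists_between h
  have hρt : ρ ≠ ⊤ := (hρ2.trans one_lt_top).ne
  have hev : ∀ᶠ k : ℕ in atTop, (‖a ^ k‖₊ : ℝ≥0∞) ^ (1 / k : ℝ) < ρ :=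
    (spectrum.pow_nnnorm_pow_one_div_tendsto_nhds_spectralRadius a).eventually_lt_const hρ1
  have hev2 : ∀ᶠ k : ℕ in atTop, ‖a ^ k‖ ≤ ρ.toReal ^ k := by
    filter_upwards [hev, eventually_ge_atTop 1] with k hk hk1
    have hk0 : (k : ℝ) ≠ 0 := by positivity
    have := ENNReal.rpow_le_rpow hk.le (by positivity : (0:ℝ) ≤ (k : ℝ))
    rw [← ENNReal.rpow_mul, one_div, inv_mul_cancel₀ hk0, ENNReal.rpow_one,
      ENNReal.rpow_natCast] at this
    have h2 : (‖a ^ k‖₊ : ℝ≥0∞).toReal ≤ (ρ ^ k).toReal :=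
      ENNReal.toReal_mono (by simp [hρt]) this
    simpa [ENNReal.toReal_pow] using h2
  have hgeom : Summable fun k : ℕ => ρ.toReal ^ k := by
    apply summable_geometric_of_lt_one ENNReal.toReal_nonneg
    exact (ENNReal.toReal_lt_toReal hρt one_ne_top).mpr (by simpa using hρ2)
  apply Summable.of_norm_bounded_eventually hgeom
  rw [Nat.cofinite_eq_atTop]
  filter_upwards [hev2] with k hk
  simpa using hk

/-- evaluation of `M.mulVec c` at `i`, as a continuous linear map on matrices. -/
private noncomputable def evalCLM {𝕜 : Type*} [RCLike 𝕜] (c : n → 𝕜) (i : m) :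
    Matrix m n 𝕜 →L[𝕜] 𝕜 :=
  LinearMap.mkContinuous
    { toFun := fun M : Matrix m n 𝕜 => M.mulVec c i
      map_add' := fun M N => by simp [Matrix.add_mulVec]
      map_smul' := fun r M => by simp [Matrix.smul_mulVec] }
    ‖c‖ (fun M => by
      calc ‖M.mulVec c i‖ ≤ ‖M.mulVec c‖ := norm_le_pi_norm _ i
        _ ≤ ‖M‖ * ‖c‖ := Matrix.linfty_opNorm_mulVec _ _
        _ = ‖c‖ * ‖M‖ := mul_comm _ _)

private lemma evalCLM_apply {𝕜 : Type*} [RCLike 𝕜] (c : n → 𝕜) (i : m) (M : Matrix m n 𝕜) :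
    evalCLM c i M = M.mulVec c i := rfl

end aux

/-- If `A` is an entrywise nonnegative `p × p` real matrix whose spectral
radius is `< 1` (i.e. every complex eigenvalue has modulus `< 1`) and `B` is an entrywise
nonnegative `p × q` real matrix, then for every `z` on the complex unit circle the matrix
`z • I - A` is invertible and `|((z • I - A)⁻¹ B d)_i| ≤ ((I - A)⁻¹ B |d|)_i` for every
complex vector `d` and index `i`. -/
theorem stmt0 (p q : ℕ) (A : Matrix (Fin p) (Fin p) ℝ) (B : Matrix (Fin p) (Fin q) ℝ)
    (hA : ∀ i j, 0 ≤ A i j) (hB : ∀ i j, 0 ≤ B i j)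
    (hsr : ∀ μ ∈ spectrum ℂ (A.map (Complex.ofReal)), ‖μ‖ < 1) :
    ∀ z : ℂ, ‖z‖ = 1 →
      IsUnit (z • (1 : Matrix (Fin p) (Fin p) ℂ) - A.map Complex.ofReal) ∧
      ∀ (d : Fin q → ℂ) (i : Fin p),
        ‖(((z • (1 : Matrix (Fin p) (Fin p) ℂ) - A.map Complex.ofReal)⁻¹
                * B.map Complex.ofReal).mulVec d i)‖
          ≤ ((1 - A)⁻¹ * B).mulVec (fun k => ‖d k‖) i := by
  intro z hz
  have hz0 : z ≠ 0 := by
    intro h; rw [h, norm_zero] at hz; exact one_ne_zero hz.symm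
  set A' : Matrix (Fin p) (Fin p) ℂ := A.map Complex.ofReal with hA'
  have hunit : IsUnit (z • (1 : Matrix (Fin p) (Fin p) ℂ) - A') := by
    by_contra hcon
    have hmem : z ∈ spectrum ℂ A' := by
      rw [spectrum.mem_iff, Algebra.algebraMap_eq_smul_one]
      exact hcon
    have := hsr z hmem
    rw [hz] at this
    exact lt_irrefl 1 this
  refine ⟨hunit, ?_⟩
  intro d i
  haveI : Nonempty (Fin p) := ⟨i⟩
  -- spectral radius < 1
  have hsr' : spectralRadius ℂ A' < 1 := by
    have h1 : ∀ μ ∈ spectrum ℂ A', ‖μ‖₊ < (1 : ℝ≥0) := by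
      intro μ hμ
      have := hsr μ hμ
      rwa [← coe_nnnorm, ← NNReal.coe_one, NNReal.coe_lt_coe] at this
    have := spectrum.spectralRadius_lt_of_forall_lt A' h1
    simpa using this
  have hsum : Summable fun k : ℕ => ‖A' ^ k‖ := summable_norm_pow_of_sr hsr'
  -- the geometric series for b = z⁻¹ • A'
  set b : Matrix (Fin p) (Fin p) ℂ := z⁻¹ • A' with hb
  have hbpow : ∀ k : ℕ, b ^ k = (z⁻¹) ^ k • A' ^ k := fun k => smul_pow _ _ _
  have hzinv : ‖z⁻¹‖ = 1 := by rw [norm_inv, hz, inv_one]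
  have hbn : ∀ k : ℕ, ‖b ^ k‖ = ‖A' ^ k‖ := by
    intro k
    rw [hbpow, norm_smul, norm_pow, hzinv, one_pow, one_mul]
  have hsumb : Summable fun k : ℕ => ‖b ^ k‖ := by
    simpa only [hbn] using hsum
  obtain ⟨hHasb, hinvb⟩ := geom_inv hsumb
  set s : Matrix (Fin p) (Fin p) ℂ := ∑' k : ℕ, b ^ k with hsdef
  have hzz : z • (1 : Matrix (Fin p) (Fin p) ℂ) - A' = z • (1 - b) := by
    rw [smul_sub, hb, smul_smul, mul_inv_cancel₀ hz0, one_smul]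
  have hright : (z • (1 : Matrix (Fin p) (Fin p) ℂ) - A') * (z⁻¹ • s) = 1 := by
    rw [hzz, smul_mul_smul_comm, mul_inv_cancel₀ hz0, one_smul]
    exact hinvb
  have hinv : (z • (1 : Matrix (Fin p) (Fin p) ℂ) - A')⁻¹ = z⁻¹ • s :=
    Matrix.inv_eq_right_inv hright
  -- real series
  have hpowmap : ∀ k : ℕ, A' ^ k = (A ^ k).map Complex.ofReal := by
    intro k
    induction k with
    | zero =>
        ext i j
        simp [Matrix.map_apply, Matrix.one_apply, apply_ite]
    | succ k ih =>
        ext i j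
        rw [hA'] at ih
        simp [pow_succ, ih, Matrix.mul_apply, Matrix.map_apply, hA']
  have hmapn : ∀ M : Matrix (Fin p) (Fin p) ℝ, ‖M.map Complex.ofReal‖ = ‖M‖ := by
    intro M
    rw [Matrix.linfty_opNorm_def, Matrix.linfty_opNorm_def]
    congr 1
    apply Finset.sup_congr rfl
    intro x _
    apply Finset.sum_congr rfl
    intro y _
    simp [Matrix.map_apply]
  have hsumA : Summable fun k : ℕ => ‖A ^ k‖ := by
    have : ∀ k : ℕ, ‖A ^ k‖ = ‖A' ^ k‖ := by
      intro k; rw [hpowmap, hmapn]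
    simpa only [this] using hsum
  obtain ⟨hHasA, hinvA⟩ := geom_inv hsumA
  set Sr : Matrix (Fin p) (Fin p) ℝ := ∑' k : ℕ, A ^ k with hSr
  have hinvAr : (1 - A)⁻¹ = Sr := Matrix.inv_eq_right_inv hinvA
  -- CLMs
  set c : Fin p → ℂ := (B.map Complex.ofReal).mulVec d with hc
  set cr : Fin p → ℝ := B.mulVec (fun k => ‖d k‖) with hcr
  set φ := evalCLM c i with hφ
  set ψ := evalCLM cr i with hψ
  -- nonnegativity of powers
  have hAk : ∀ (k : ℕ) (i' j' : Fin p), 0 ≤ (A ^ k) i' j' := by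
    intro k
    induction k with
    | zero =>
        intro i' j'
        by_cases h : i' = j' <;> simp [Matrix.one_apply, h]
    | succ k ih =>
        intro i' j'
        rw [pow_succ, Matrix.mul_apply]
        exact Finset.sum_nonneg fun l _ => mul_nonneg (ih _ _) (hA _ _)
  have hABk : ∀ (k : ℕ) (i' : Fin p) (j' : Fin q), 0 ≤ ((A ^ k) * B) i' j' := by
    intro k i' j'
    rw [Matrix.mul_apply]
    exact Finset.sum_nonneg fun l _ => mul_nonneg (hAk _ _ _) (hB _ _)
  -- key pointwise bound: ‖φ (A'^k)‖ ≤ ψ (A^k)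
  have hφA : ∀ k : ℕ, φ (A' ^ k) = (((A ^ k) * B).map Complex.ofReal).mulVec d i := by
    intro k
    rw [hφ, evalCLM_apply, hc, Matrix.mulVec_mulVec, hpowmap]
    rw [show (A ^ k).map Complex.ofReal * B.map Complex.ofReal
        = ((A ^ k) * B).map Complex.ofReal from ?_]
    · ext i' j'
      simp [Matrix.mul_apply, Matrix.map_apply]
  have hψA : ∀ k : ℕ, ψ (A ^ k) = ((A ^ k) * B).mulVec (fun k => ‖d k‖) i := by
    intro k
    rw [hψ, evalCLM_apply, hcr, Matrix.mulVec_mulVec]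
  have key : ∀ k : ℕ, ‖φ (A' ^ k)‖ ≤ ψ (A ^ k) := by
    intro k
    rw [hφA, hψA]
    rw [Matrix.mulVec, Matrix.mulVec]
    calc ‖(((A ^ k * B).map Complex.ofReal) i) ⬝ᵥ d‖
        = ‖∑ j, ((A ^ k * B) i j : ℂ) * d j‖ := by
          rfl
      _ ≤ ∑ j, ‖((A ^ k * B) i j : ℂ) * d j‖ := by
          apply norm_sum_le
      _ = ∑ j, (A ^ k * B) i j * ‖d j‖ := by
          apply Finset.sum_congr rfl
          intro j _
          rw [norm_mul, Complex.norm_real, Real.norm_eq_abs, abs_of_nonneg (hABk k i j)]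
      _ = ((A ^ k * B) i) ⬝ᵥ (fun j => ‖d j‖) := rfl
  -- summability on the ψ side
  have hHasψ : HasSum (fun k : ℕ => ψ (A ^ k)) (ψ Sr) := hHasA.mapL ψ
  have hψnonneg : ∀ k : ℕ, 0 ≤ ψ (A ^ k) := fun k =>
    (norm_nonneg _).trans (key k)
  -- φ side
  have hφb : ∀ k : ℕ, φ (b ^ k) = (z⁻¹) ^ k • φ (A' ^ k) := by
    intro k
    rw [hbpow, _root_.map_smul]
  have hφbn : ∀ k : ℕ, ‖φ (b ^ k)‖ = ‖φ (A' ^ k)‖ := by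
    intro k
    rw [hφb, norm_smul, norm_pow, hzinv, one_pow, one_mul]
  have hsumφn : Summable fun k : ℕ => ‖φ (b ^ k)‖ := by
    apply Summable.of_nonneg_of_le (fun k => norm_nonneg _) _ hHasψ.summable
    intro k
    rw [hφbn]
    exact key k
  have hHasφ : HasSum (fun k : ℕ => φ (b ^ k)) (φ s) := hHasb.mapL φ
  -- final computation
  have lhs_eq : ((z • (1 : Matrix (Fin p) (Fin p) ℂ) - A')⁻¹
      * B.map Complex.ofReal).mulVec d i = z⁻¹ * φ s := by
    rw [← Matrix.mulVec_mulVec, ← hc, hinv]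
    rw [hφ, evalCLM_apply]
    rw [Matrix.smul_mulVec]
    simp [smul_eq_mul]
  have rhs_eq : ((1 - A)⁻¹ * B).mulVec (fun k => ‖d k‖) i = ψ Sr := by
    rw [hinvAr, ← Matrix.mulVec_mulVec, ← hcr, hψ, evalCLM_apply]
  rw [lhs_eq, rhs_eq]
  calc ‖z⁻¹ * φ s‖ = ‖φ s‖ := by rw [norm_mul, hzinv, one_mul]
    _ = ‖∑' k : ℕ, φ (b ^ k)‖ := by rw [hHasφ.tsum_eq]
    _ ≤ ∑' k : ℕ, ‖φ (b ^ k)‖ := norm_tsum_le_tsum_norm hsumφn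
    _ ≤ ∑' k : ℕ, ψ (A ^ k) := by
        apply Summable.tsum_le_tsum _ hsumφn hHasψ.summable
        intro k
        rw [hφbn]
        exact key k
    _ = ψ Sr := hHasψ.tsum_eq
end

section
/- Let A be a p×p entrywise nonnegative real matrix whose spectral radius is strictly less than 1, and let B be a p×q entrywise nonnegative real matrix. Then for every complex number z with |z| = 1, the operator 2-norm satisfies ‖(z·I − A)⁻¹ B‖₂ ≤ ‖(I − A)⁻¹ B‖₂, where on the left the matrices are viewed over ℂ and the norm is the operator norm induced by the Euclidean norms; that is, the supremum over the unit circle of ‖(z·I − A)⁻¹ B‖₂ is attained at z = 1. -/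
open Matrix Filter Topology Finset
open scoped ENNReal NNReal

attribute [local instance] Matrix.linftyOpNormedAddCommGroup Matrix.linftyOpNormedRing
  Matrix.linftyOpNormedAlgebra


/-- The operator norm of a matrix induced by the Euclidean (`ℓ²`) norms on the
domain and codomain. -/
noncomputable def opNorm2 {𝕜 : Type*} [RCLike 𝕜] {m n : Type*} [Fintype m] [Fintype n]
    [DecidableEq n] (M : Matrix m n 𝕜) : ℝ :=
  ‖LinearMap.toContinuousLinearMap (Matrix.toEuclideanLin M)‖

lemma entry_nnnorm_le {m n : Type*} [Fintype m] [Fintype n] (M : Matrix m n ℂ) (i : m) (j : n) :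
    ‖M i j‖₊ ≤ ‖M‖₊ := by
  rw [Matrix.linfty_opNNNorm_def]
  exact le_trans
    (Finset.single_le_sum (f := fun k => ‖M i k‖₊) (fun k _ => zero_le) (Finset.mem_univ j))
    (Finset.le_sup (f := fun i => ∑ j, ‖M i j‖₊) (Finset.mem_univ i))

lemma entry_norm_le {m n : Type*} [Fintype m] [Fintype n] (M : Matrix m n ℂ) (i : m) (j : n) :
    ‖M i j‖ ≤ ‖M‖ := entry_nnnorm_le M i j

lemma pow_tendsto_zero {𝔸 : Type*} [NormedRing 𝔸] [NormedAlgebra ℂ 𝔸] [CompleteSpace 𝔸]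
    {a : 𝔸} (h : spectralRadius ℂ a < 1) : Tendsto (fun n : ℕ => a ^ n) atTop (𝓝 0) := by
  obtain ⟨r, hr1, hr2⟩ := ENNReal.lt_iff_exists_nnreal_btwn.mp h
  have hgel := spectrum.pow_nnnorm_pow_one_div_tendsto_nhds_spectralRadius a
  have hev : ∀ᶠ n : ℕ in atTop, (‖a ^ n‖₊ : ℝ≥0∞) ^ (1 / (n : ℝ)) < (r : ℝ≥0∞) :=
    hgel.eventually_lt_const hr1
  have hub : ∀ᶠ n : ℕ in atTop, ‖a ^ n‖ ≤ (r : ℝ) ^ n := by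
    filter_upwards [hev, eventually_ge_atTop 1] with n hn hn1
    have hn0 : (n : ℝ) ≠ 0 := by positivity
    have h2 : ((‖a ^ n‖₊ : ℝ≥0∞) ^ (1 / (n : ℝ))) ^ (n : ℝ) ≤ (r : ℝ≥0∞) ^ (n : ℝ) :=
      ENNReal.rpow_le_rpow hn.le (by positivity)
    rw [← ENNReal.rpow_mul, one_div_mul_cancel hn0, ENNReal.rpow_one,
      ENNReal.rpow_natCast, ← ENNReal.coe_pow, ENNReal.coe_le_coe] at h2
    calc ‖a ^ n‖ = ((‖a ^ n‖₊ : ℝ≥0) : ℝ) := rfl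
      _ ≤ ((r ^ n : ℝ≥0) : ℝ) := by exact_mod_cast h2
      _ = (r : ℝ) ^ n := by push_cast; ring
  exact squeeze_zero_norm' hub (tendsto_pow_atTop_nhds_zero_of_lt_one r.coe_nonneg
    (by exact_mod_cast hr2))

lemma pow_entry_nonneg {p : ℕ} {A : Matrix (Fin p) (Fin p) ℝ} (hA : ∀ i j, 0 ≤ A i j) :
    ∀ (n : ℕ) (i j : Fin p), 0 ≤ (A ^ n) i j := by
  intro n
  induction n with
  | zero => intro i j; rw [pow_zero, Matrix.one_apply]; positivity
  | succ n ih =>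
    intro i j
    rw [pow_succ, Matrix.mul_apply]
    exact Finset.sum_nonneg fun k _ => mul_nonneg (ih i k) (hA k j)

lemma opNorm2_dom {p q : ℕ} (M : Matrix (Fin p) (Fin q) ℂ) (N : Matrix (Fin p) (Fin q) ℝ)
    (h : ∀ i j, ‖M i j‖ ≤ N i j) : opNorm2 M ≤ opNorm2 N := by
  refine ContinuousLinearMap.opNorm_le_bound _ (norm_nonneg _) fun x => ?_
  set y : EuclideanSpace ℝ (Fin q) := (WithLp.equiv 2 (Fin q → ℝ)).symm fun j => ‖x j‖ with hy
  have hyx : ‖y‖ = ‖x‖ := by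
    rw [EuclideanSpace.norm_eq, EuclideanSpace.norm_eq]
    congr 1
    refine Finset.sum_congr rfl fun j _ => ?_
    rw [hy, WithLp.equiv_symm_apply, PiLp.toLp_apply, norm_norm]
  have key : ‖(LinearMap.toContinuousLinearMap (Matrix.toEuclideanLin M)) x‖
      ≤ ‖(LinearMap.toContinuousLinearMap (Matrix.toEuclideanLin N)) y‖ := by
    simp only [LinearMap.coe_toContinuousLinearMap', Matrix.toEuclideanLin_apply]
    rw [EuclideanSpace.norm_eq, EuclideanSpace.norm_eq]
    apply Real.sqrt_le_sqrt
    apply Finset.sum_le_sum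
    intro i _
    simp only [PiLp.toLp_apply]
    have hNy : (N *ᵥ (WithLp.equiv 2 (Fin q → ℝ)) y) i = ∑ j, N i j * ‖x j‖ := by
      rw [Matrix.mulVec, dotProduct]
      refine Finset.sum_congr rfl fun j _ => ?_
      rw [hy]
      rfl
    have h1 : ‖(M *ᵥ (WithLp.equiv 2 (Fin q → ℂ)) x) i‖
        ≤ (N *ᵥ (WithLp.equiv 2 (Fin q → ℝ)) y) i := by
      rw [hNy, Matrix.mulVec, dotProduct]
      refine le_trans (norm_sum_le _ _) (Finset.sum_le_sum fun j _ => ?_)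
      rw [norm_mul]
      exact mul_le_mul_of_nonneg_right (h i j) (norm_nonneg _)
    have h2 : 0 ≤ (N *ᵥ (WithLp.equiv 2 (Fin q → ℝ)) y) i := le_trans (norm_nonneg _) h1
    rw [show (N *ᵥ y.ofLp) i = (N *ᵥ (WithLp.equiv 2 (Fin q → ℝ)) y) i from rfl,
      Real.norm_of_nonneg h2]
    exact pow_le_pow_left₀ (norm_nonneg _) h1 2
  calc ‖(LinearMap.toContinuousLinearMap (Matrix.toEuclideanLin M)) x‖
      ≤ ‖(LinearMap.toContinuousLinearMap (Matrix.toEuclideanLin N)) y‖ := key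
    _ ≤ opNorm2 N * ‖y‖ := ContinuousLinearMap.le_opNorm _ _
    _ = opNorm2 N * ‖x‖ := by rw [hyx]

lemma map_ofReal_pow {p : ℕ} (M : Matrix (Fin p) (Fin p) ℝ) (n : ℕ) :
    (M.map Complex.ofReal) ^ n = (M ^ n).map Complex.ofReal := by
  have h := map_pow (Complex.ofRealHom.mapMatrix) M n
  rw [RingHom.mapMatrix_apply, RingHom.mapMatrix_apply] at h
  exact h.symm

lemma map_ofReal_det {p : ℕ} (M : Matrix (Fin p) (Fin p) ℝ) :
    (M.map Complex.ofReal).det = Complex.ofReal M.det := by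
  have h := RingHom.map_det Complex.ofRealHom M
  rw [RingHom.mapMatrix_apply] at h
  exact h.symm

/-- If `A` is an entrywise nonnegative `p × p` real matrix with spectral
radius `< 1` and `B` is an entrywise nonnegative `p × q` real matrix, then for every `z`
on the complex unit circle, `‖(z • I - A)⁻¹ B‖₂ ≤ ‖(I - A)⁻¹ B‖₂`; i.e. the supremum over
the unit circle of the operator 2-norm is attained at `z = 1`. -/
theorem stmt1 (p q : ℕ) (A : Matrix (Fin p) (Fin p) ℝ) (B : Matrix (Fin p) (Fin q) ℝ)
    (hA : ∀ i j, 0 ≤ A i j) (hB : ∀ i j, 0 ≤ B i j)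
    (hsr : ∀ μ ∈ spectrum ℂ (A.map (Complex.ofReal)), ‖μ‖ < 1) :
    ∀ z : ℂ, ‖z‖ = 1 →
      opNorm2 ((z • (1 : Matrix (Fin p) (Fin p) ℂ) - A.map Complex.ofReal)⁻¹
          * B.map Complex.ofReal)
        ≤ opNorm2 ((1 - A)⁻¹ * B) := by
  intro z hz
  haveI : CompleteSpace (Matrix (Fin p) (Fin p) ℂ) := FiniteDimensional.complete ℂ _
  set AC : Matrix (Fin p) (Fin p) ℂ := A.map Complex.ofReal with hAC
  set BC : Matrix (Fin p) (Fin q) ℂ := B.map Complex.ofReal with hBC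
  have hz0 : z ≠ 0 := by
    intro h0; rw [h0, norm_zero] at hz; norm_num at hz
  -- complex invertibility of z•1 - AC
  have hzu : IsUnit (z • (1 : Matrix (Fin p) (Fin p) ℂ) - AC) := by
    by_contra hcon
    have hmem : z ∈ spectrum ℂ AC := by
      rw [spectrum.mem_iff, Algebra.algebraMap_eq_smul_one]
      exact hcon
    exact absurd (hsr z hmem) (by rw [hz]; exact lt_irrefl 1)
  have hdetz : IsUnit (z • (1 : Matrix (Fin p) (Fin p) ℂ) - AC).det :=
    (Matrix.isUnit_iff_isUnit_det _).mp hzu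
  -- real invertibility of 1 - A
  have hmap_sub : ((1 : Matrix (Fin p) (Fin p) ℝ) - A).map Complex.ofReal
      = (1 : Matrix (Fin p) (Fin p) ℂ) - AC := by
    have h := map_sub (Complex.ofRealHom.mapMatrix) (1 : Matrix (Fin p) (Fin p) ℝ) A
    rw [RingHom.mapMatrix_apply, RingHom.mapMatrix_apply, RingHom.mapMatrix_apply,
      Matrix.map_one _ (map_zero _) (map_one _)] at h
    exact h
  have hdetR : IsUnit ((1 : Matrix (Fin p) (Fin p) ℝ) - A).det := by
    have h1 : (1 : ℂ) ∉ spectrum ℂ AC := fun hmem => absurd (hsr 1 hmem) (by simp)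
    rw [spectrum.notMem_iff, _root_.map_one] at h1
    have h2 := (Matrix.isUnit_iff_isUnit_det _).mp h1
    rw [← hmap_sub, map_ofReal_det] at h2
    rw [isUnit_iff_ne_zero] at h2 ⊢
    intro h0
    exact h2 (by rw [h0]; simp)
  set C : Matrix (Fin p) (Fin p) ℝ := ((1 : Matrix (Fin p) (Fin p) ℝ) - A)⁻¹ with hC
  set invz : Matrix (Fin p) (Fin p) ℂ :=
    (z • (1 : Matrix (Fin p) (Fin p) ℂ) - AC)⁻¹ with hinvz
  -- spectral radius < 1 and power convergence
  have hsrlt : spectralRadius ℂ AC < 1 := by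
    rcases Set.eq_empty_or_nonempty (spectrum ℂ AC) with he | hne
    · rw [spectralRadius, he]
      simp
    · have h := spectrum.spectralRadius_lt_of_forall_lt_of_nonempty hne (r := 1)
        (fun k hk => by
          have := hsr k hk
          exact_mod_cast this)
      simpa using h
  have hpow : Tendsto (fun n : ℕ => AC ^ n) atTop (𝓝 0) := pow_tendsto_zero hsrlt
  have hpnorm : Tendsto (fun n : ℕ => ‖AC ^ n‖) atTop (𝓝 0) :=
    tendsto_zero_iff_norm_tendsto_zero.mp hpow
  have hACpow : ∀ n : ℕ, AC ^ n = (A ^ n).map Complex.ofReal := by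
    intro n
    rw [hAC]
    exact map_ofReal_pow A n
  -- entrywise convergence of A^n to 0 over ℝ
  have hentry : ∀ (k j : Fin p), Tendsto (fun n : ℕ => (A ^ n) k j) atTop (𝓝 0) := by
    intro k j
    refine squeeze_zero_norm (fun n => ?_) hpnorm
    have : ‖(A ^ n) k j‖ = ‖(AC ^ n) k j‖ := by
      rw [hACpow n]
      simp [Matrix.map_apply]
    rw [this]
    exact entry_norm_le _ k j
  -- real partial sums
  set S : ℕ → Matrix (Fin p) (Fin p) ℝ := fun N => ∑ n ∈ Finset.range N, A ^ n with hS
  have hSid : ∀ N, S N = C - C * A ^ N := by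
    intro N
    have h1 : ((1 : Matrix (Fin p) (Fin p) ℝ) - A) * S N = 1 - A ^ N := by
      have := mul_geom_sum (A) N
      calc ((1 : Matrix (Fin p) (Fin p) ℝ) - A) * S N
          = -((A - 1) * S N) := by rw [← neg_mul, neg_sub]
        _ = -(A ^ N - 1) := by rw [hS, this]
        _ = 1 - A ^ N := by rw [neg_sub]
    calc S N = C * (((1 : Matrix (Fin p) (Fin p) ℝ) - A) * S N) := by
          rw [← Matrix.mul_assoc, hC, Matrix.nonsing_inv_mul _ hdetR, Matrix.one_mul]
      _ = C * (1 - A ^ N) := by rw [h1]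
      _ = C - C * A ^ N := by rw [Matrix.mul_sub, Matrix.mul_one]
  have hStendsto : ∀ i j, Tendsto (fun N => S N i j) atTop (𝓝 (C i j)) := by
    intro i j
    have hcorr : Tendsto (fun N => (C * A ^ N) i j) atTop (𝓝 0) := by
      have : ∀ N, (C * A ^ N) i j = ∑ k, C i k * (A ^ N) k j := fun N => Matrix.mul_apply
      simp only [this]
      have := tendsto_finset_sum (Finset.univ : Finset (Fin p))
        (f := fun k (N : ℕ) => C i k * (A ^ N) k j)
        (fun k _ => by simpa using (hentry k j).const_mul (C i k))
      simpa using this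
    have : (fun N => S N i j) = fun N => C i j - (C * A ^ N) i j := by
      funext N
      rw [hSid N]
      simp [Matrix.sub_apply]
    rw [this]
    simpa using tendsto_const_nhds.sub hcorr
  have hSmono : ∀ i j, Monotone fun N => S N i j := by
    intro i j
    apply monotone_nat_of_le_succ
    intro N
    have : S (N + 1) = S N + A ^ N := by rw [hS]; exact Finset.sum_range_succ _ N
    rw [this]
    simp only [Matrix.add_apply]
    exact le_add_of_nonneg_right (pow_entry_nonneg hA N i j)
  have hSC : ∀ N i j, S N i j ≤ C i j := fun N i j =>
    (hSmono i j).ge_of_tendsto (hStendsto i j) N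
  -- complex partial sums
  set P : ℕ → Matrix (Fin p) (Fin p) ℂ :=
    fun N => ∑ n ∈ Finset.range N, (z⁻¹) ^ (n + 1) • AC ^ n with hP
  set f : ℕ → Matrix (Fin p) (Fin p) ℂ := fun n => (z⁻¹) ^ n • AC ^ n with hf
  have htel : ∀ N, (z • (1 : Matrix (Fin p) (Fin p) ℂ) - AC) * P N = 1 - f N := by
    intro N
    have hterm : ∀ n, (z • (1 : Matrix (Fin p) (Fin p) ℂ) - AC) * ((z⁻¹) ^ (n + 1) • AC ^ n)
        = f n - f (n + 1) := by
      intro n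
      have e1 : (z • (1 : Matrix (Fin p) (Fin p) ℂ) - AC) * AC ^ n
          = z • AC ^ n - AC ^ (n + 1) := by
        rw [Matrix.sub_mul, Matrix.smul_mul, Matrix.one_mul, pow_succ']
      have e2 : (z⁻¹) ^ (n + 1) * z = (z⁻¹) ^ n := by
        rw [pow_succ, mul_assoc, inv_mul_cancel₀ hz0, mul_one]
      simp only [hf]
      rw [Matrix.mul_smul, e1, smul_sub, smul_smul, e2]
    calc (z • (1 : Matrix (Fin p) (Fin p) ℂ) - AC) * P N
        = ∑ n ∈ Finset.range N, (z • (1 : Matrix (Fin p) (Fin p) ℂ) - AC)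
            * ((z⁻¹) ^ (n + 1) • AC ^ n) := by rw [hP, Finset.mul_sum]
      _ = ∑ n ∈ Finset.range N, (f n - f (n + 1)) := by
          exact Finset.sum_congr rfl fun n _ => hterm n
      _ = f 0 - f N := Finset.sum_range_sub' f N
      _ = 1 - f N := by rw [hf]; simp
  have hPid : ∀ N, P N = invz - (z⁻¹) ^ N • (invz * AC ^ N) := by
    intro N
    calc P N = invz * ((z • (1 : Matrix (Fin p) (Fin p) ℂ) - AC) * P N) := by
          rw [← Matrix.mul_assoc, hinvz, Matrix.nonsing_inv_mul _ hdetz, Matrix.one_mul]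
      _ = invz * (1 - f N) := by rw [htel N]
      _ = invz - (z⁻¹) ^ N • (invz * AC ^ N) := by
          rw [Matrix.mul_sub, Matrix.mul_one, hf, Matrix.mul_smul]
  have hzinv : ‖z⁻¹‖ = 1 := by rw [norm_inv, hz]; norm_num
  have hPtendsto : ∀ i j, Tendsto (fun N => P N i j) atTop (𝓝 (invz i j)) := by
    intro i j
    have hcorr : Tendsto (fun N => ((z⁻¹) ^ N • (invz * AC ^ N)) i j) atTop (𝓝 0) := by
      refine squeeze_zero_norm (a := fun N => ‖invz‖ * ‖AC ^ N‖) (fun N => ?_)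
        (by simpa using hpnorm.const_mul ‖invz‖)
      have : ((z⁻¹) ^ N • (invz * AC ^ N)) i j = (z⁻¹) ^ N * (invz * AC ^ N) i j := rfl
      rw [this, norm_mul, norm_pow, hzinv, one_pow, one_mul]
      exact le_trans (entry_norm_le _ i j) (norm_mul_le _ _)
    have : (fun N => P N i j) = fun N => invz i j - ((z⁻¹) ^ N • (invz * AC ^ N)) i j := by
      funext N
      rw [hPid N]
      simp [Matrix.sub_apply]
    rw [this]
    simpa using tendsto_const_nhds.sub hcorr
  -- entrywise bound on invz
  have hPbound : ∀ N i j, ‖P N i j‖ ≤ S N i j := by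
    intro N i j
    have e1 : P N i j = ∑ n ∈ Finset.range N, (z⁻¹) ^ (n + 1) * (AC ^ n) i j := by
      simp only [hP, Matrix.sum_apply, Matrix.smul_apply, smul_eq_mul]
    have e2 : S N i j = ∑ n ∈ Finset.range N, (A ^ n) i j := by
      simp only [hS, Matrix.sum_apply]
    rw [e1, e2]
    refine le_trans (norm_sum_le _ _) (Finset.sum_le_sum fun n _ => ?_)
    rw [norm_mul, norm_pow, hzinv, one_pow, one_mul]
    have : (AC ^ n) i j = Complex.ofReal ((A ^ n) i j) := by
      rw [hACpow n]; rfl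
    rw [this, Complex.norm_real, Real.norm_of_nonneg (pow_entry_nonneg hA n i j)]
  have hinvzbound : ∀ i j, ‖invz i j‖ ≤ C i j := by
    intro i j
    refine le_of_tendsto ((continuous_norm.tendsto _).comp (hPtendsto i j))
      (Filter.Eventually.of_forall fun N => ?_)
    exact le_trans (hPbound N i j) (hSC N i j)
  -- final comparison
  apply opNorm2_dom
  intro i j
  have e1 : (invz * BC) i j = ∑ k, invz i k * BC k j := Matrix.mul_apply
  have e2 : ((1 - A)⁻¹ * B) i j = ∑ k, C i k * B k j := Matrix.mul_apply
  rw [e1, e2]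
  refine le_trans (norm_sum_le _ _) (Finset.sum_le_sum fun k _ => ?_)
  rw [norm_mul]
  have hBCnorm : ‖BC k j‖ = B k j := by
    rw [hBC]
    show ‖(Complex.ofReal (B k j))‖ = B k j
    rw [Complex.norm_real, Real.norm_of_nonneg (hB k j)]
  rw [hBCnorm]
  exact mul_le_mul_of_nonneg_right (hinvzbound i k) (hB k j)
end

section
/- Let A be a p×p entrywise nonnegative real matrix with spectral radius strictly less than 1, and let B be a p×q entrywise nonnegative real matrix. If for every row index i one has Σ_j A_{ij} + Σ_k B_{ik} ≤ 1/√p, then the operator 2-norm satisfies ‖(I − A)⁻¹ B‖₂ ≤ 1. -/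
open Matrix Finset

lemma opNorm2_le_of_rows {p q : ℕ} (M : Matrix (Fin p) (Fin q) ℝ) (c : ℝ) (hc : 0 ≤ c)
    (h : ∀ i, ∑ k, |M i k| ≤ c) :
    opNorm2 M ≤ Real.sqrt p * c := by
  unfold opNorm2
  apply ContinuousLinearMap.opNorm_le_bound _ (by positivity)
  intro x
  rw [LinearMap.coe_toContinuousLinearMap']
  have hcoord : ∀ k, |x k| ≤ ‖x‖ := by
    intro k
    rw [EuclideanSpace.norm_eq]
    have : |x k| = Real.sqrt (‖x k‖ ^ 2) := by
      rw [Real.sqrt_sq_eq_abs, abs_norm, Real.norm_eq_abs]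
    rw [this]
    apply Real.sqrt_le_sqrt
    exact Finset.single_le_sum (f := fun i => ‖x i‖ ^ 2) (fun i _ => sq_nonneg _) (mem_univ k)
  have happ : ∀ i, (toEuclideanLin M x : EuclideanSpace ℝ (Fin p)) i = ∑ k, M i k * x k := by
    intro i
    rw [Matrix.toEuclideanLin_apply]
    rfl
  have hbound : ∀ i, |(toEuclideanLin M x : EuclideanSpace ℝ (Fin p)) i| ≤ c * ‖x‖ := by
    intro i
    rw [happ i]
    calc |∑ k, M i k * x k| ≤ ∑ k, |M i k * x k| := Finset.abs_sum_le_sum_abs _ _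
    _ ≤ ∑ k, |M i k| * ‖x‖ := by
        apply Finset.sum_le_sum
        intro k _
        rw [abs_mul]
        exact mul_le_mul_of_nonneg_left (hcoord k) (abs_nonneg _)
    _ = (∑ k, |M i k|) * ‖x‖ := by rw [Finset.sum_mul]
    _ ≤ c * ‖x‖ := mul_le_mul_of_nonneg_right (h i) (norm_nonneg _)
  rw [EuclideanSpace.norm_eq]
  calc Real.sqrt (∑ i, ‖(toEuclideanLin M x : EuclideanSpace ℝ (Fin p)) i‖ ^ 2)
      ≤ Real.sqrt (∑ _i : Fin p, (c * ‖x‖) ^ 2) := by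
        apply Real.sqrt_le_sqrt
        apply Finset.sum_le_sum
        intro i _
        rw [Real.norm_eq_abs]
        exact pow_le_pow_left₀ (abs_nonneg _) (hbound i) 2
    _ = Real.sqrt p * (c * ‖x‖) := by
        rw [Finset.sum_const, card_univ, Fintype.card_fin, nsmul_eq_mul,
          Real.sqrt_mul (Nat.cast_nonneg p), Real.sqrt_sq (by positivity)]
    _ = Real.sqrt p * c * ‖x‖ := by ring

lemma rowsum_bound (p q : ℕ) (hp : p ≠ 0) (A : Matrix (Fin p) (Fin p) ℝ) (B : Matrix (Fin p) (Fin q) ℝ)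
    (hA : ∀ i j, 0 ≤ A i j) (hB : ∀ i j, 0 ≤ B i j)
    (hsr : ∀ μ ∈ spectrum ℂ (A.map (Complex.ofReal)), ‖μ‖ < 1)
    (hrow : ∀ i, (∑ j, A i j) + (∑ k, B i k) ≤ 1 / Real.sqrt p) :
    ∀ i, ∑ k, |((1 - A)⁻¹ * B) i k| ≤ 1 / Real.sqrt p := by
  have hdet : (1 - A).det ≠ 0 := by
    intro h0
    have hmap : ((1 : Matrix (Fin p) (Fin p) ℂ) - A.map Complex.ofReal).det = 0 := by
      have : (1 : Matrix (Fin p) (Fin p) ℂ) - A.map Complex.ofReal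
          = (1 - A).map Complex.ofReal := by
        ext i j
        by_cases hij : i = j <;>
          simp [Matrix.map_apply, Matrix.one_apply, Matrix.sub_apply, hij]
      rw [this, show (1 - A).map Complex.ofReal = Complex.ofRealHom.mapMatrix (1 - A) from rfl,
        ← RingHom.map_det Complex.ofRealHom (1 - A), h0]
      simp
    have h1 : (1 : ℂ) ∈ spectrum ℂ (A.map Complex.ofReal) := by
      rw [spectrum.mem_iff]
      intro hu
      rw [Matrix.isUnit_iff_isUnit_det] at hu
      simp only [Algebra.algebraMap_eq_smul_one, one_smul] at hu
      rw [hmap] at hu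
      exact (not_isUnit_zero hu)
    have := hsr 1 h1
    simp at this
  set M := (1 - A)⁻¹ * B with hMdef
  have hu : IsUnit (1 - A).det := isUnit_iff_ne_zero.mpr hdet
  have hMeq : (1 - A) * M = B := by
    rw [hMdef, ← Matrix.mul_assoc, Matrix.mul_nonsing_inv _ hu, Matrix.one_mul]
  have hEnt : ∀ i k, M i k = (∑ j, A i j * M j k) + B i k := by
    intro i k
    have := congrFun (congrFun hMeq i) k
    rw [Matrix.mul_apply] at this
    simp only [Matrix.sub_apply, Matrix.one_apply, sub_mul, ite_mul, one_mul, zero_mul,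
      Finset.sum_sub_distrib, Finset.sum_ite_eq, Finset.mem_univ, if_pos] at this
    linarith
  set u : Fin p → ℝ := fun i => ∑ k, |M i k| with hudef
  set c : ℝ := 1 / Real.sqrt p with hcdef
  have hp1 : (1:ℝ) ≤ Real.sqrt p := by
    rw [show (1:ℝ) = Real.sqrt 1 by simp]
    apply Real.sqrt_le_sqrt
    exact_mod_cast Nat.one_le_iff_ne_zero.mpr hp
  have hc1 : c ≤ 1 := by
    rw [hcdef, div_le_one (by linarith)]; linarith
  have hc0 : 0 ≤ c := by positivity
  -- choose maximizer
  haveI : Nonempty (Fin p) := ⟨⟨0, Nat.pos_of_ne_zero hp⟩⟩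
  obtain ⟨i₀, -, hmax⟩ := Finset.exists_max_image univ u ⟨Classical.arbitrary _, mem_univ _⟩
  suffices hkey : u i₀ ≤ c by
    intro i; exact le_trans (hmax i (mem_univ i)) hkey
  set r : ℝ := ∑ j, A i₀ j with hrdef
  set s : ℝ := ∑ k, B i₀ k with hsdef
  have hr0 : 0 ≤ r := Finset.sum_nonneg fun j _ => hA i₀ j
  have hs0 : 0 ≤ s := Finset.sum_nonneg fun k _ => hB i₀ k
  have hrs : r + s ≤ c := hrow i₀
  have hstep : u i₀ ≤ r * u i₀ + s := by
    calc u i₀ = ∑ k, |(∑ j, A i₀ j * M j k) + B i₀ k| := by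
          simp only [hudef]; exact Finset.sum_congr rfl fun k _ => by rw [hEnt i₀ k]
      _ ≤ ∑ k, ((∑ j, A i₀ j * |M j k|) + B i₀ k) := by
          apply Finset.sum_le_sum
          intro k _
          calc |(∑ j, A i₀ j * M j k) + B i₀ k|
              ≤ |∑ j, A i₀ j * M j k| + |B i₀ k| := abs_add_le _ _
            _ ≤ (∑ j, |A i₀ j * M j k|) + B i₀ k := by
                rw [abs_of_nonneg (hB i₀ k)]
                exact add_le_add_left (Finset.abs_sum_le_sum_abs _ _) _
            _ = (∑ j, A i₀ j * |M j k|) + B i₀ k := by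
                congr 1
                exact Finset.sum_congr rfl fun j _ => by
                  rw [abs_mul, abs_of_nonneg (hA i₀ j)]
      _ = (∑ j, A i₀ j * u j) + s := by
          rw [Finset.sum_add_distrib, Finset.sum_comm]
          congr 1
          exact Finset.sum_congr rfl fun j _ => by rw [← Finset.mul_sum]
      _ ≤ (∑ j, A i₀ j * u i₀) + s := by
          apply add_le_add_left
          apply Finset.sum_le_sum
          intro j _
          exact mul_le_mul_of_nonneg_left (hmax j (mem_univ j)) (hA i₀ j)
      _ = r * u i₀ + s := by rw [← Finset.sum_mul]
  have hrlt : r < 1 := by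
    rcases lt_or_eq_of_le (le_trans (by linarith) hc1 : r ≤ 1) with h | h
    · exact h
    · exfalso
      -- r = 1 forces c = 1 hence p = 1, and then det (1 - A) = 0
      have hceq : c = 1 := le_antisymm hc1 (by linarith)
      have hps : Real.sqrt p = 1 := by
        have : Real.sqrt p ≤ 1 := by
          by_contra hgt
          push_neg at hgt
          rw [hcdef] at hceq
          have := (div_eq_one_iff_eq (by linarith : Real.sqrt p ≠ 0)).mp hceq
          linarith
        linarith
      have hpeq : p = 1 := by
        have : (p:ℝ) = 1 := by
          have := Real.sq_sqrt (Nat.cast_nonneg p)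
          rw [hps] at this; simpa using this.symm
        exact_mod_cast this
      subst hpeq
      apply hdet
      rw [Matrix.det_fin_one]
      have : i₀ = 0 := Subsingleton.elim _ _
      rw [hrdef] at h
      simp only [Fin.sum_univ_one, this] at h
      simp [Matrix.sub_apply, Matrix.one_apply, h]
  have hs' : s ≤ c * (1 - r) := by nlinarith
  nlinarith

/-- If `A` is an entrywise nonnegative `p × p` real matrix with spectral
radius `< 1`, `B` is an entrywise nonnegative `p × q` real matrix, and every combined row
sum `Σ_j A i j + Σ_k B i k` is at most `1 / √p`, then `‖(I - A)⁻¹ B‖₂ ≤ 1`. -/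
theorem stmt3 (p q : ℕ) (A : Matrix (Fin p) (Fin p) ℝ) (B : Matrix (Fin p) (Fin q) ℝ)
    (hA : ∀ i j, 0 ≤ A i j) (hB : ∀ i j, 0 ≤ B i j)
    (hsr : ∀ μ ∈ spectrum ℂ (A.map (Complex.ofReal)), ‖μ‖ < 1)
    (hrow : ∀ i, (∑ j, A i j) + (∑ k, B i k) ≤ 1 / Real.sqrt p) :
    opNorm2 ((1 - A)⁻¹ * B) ≤ 1 := by
  rcases eq_or_ne p 0 with hp | hp
  · subst hp
    have := opNorm2_le_of_rows ((1 - A)⁻¹ * B) 0 le_rfl (fun i => i.elim0)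
    simp only [mul_zero] at this
    linarith
  · have hrows := rowsum_bound p q hp A B hA hB hsr hrow
    have hc0 : (0:ℝ) ≤ 1 / Real.sqrt p := by positivity
    have := opNorm2_le_of_rows ((1 - A)⁻¹ * B) (1 / Real.sqrt p) hc0 hrows
    have hs : Real.sqrt p ≠ 0 := by
      have : (0:ℝ) < p := by exact_mod_cast Nat.pos_of_ne_zero hp
      positivity
    calc opNorm2 ((1 - A)⁻¹ * B) ≤ Real.sqrt p * (1 / Real.sqrt p) := this
      _ = 1 := by field_simp
end

section
/- Let a, b, c ≥ 0 be real numbers with a + b + c < 1, and let G be the n×n tridiagonal Toeplitz matrix with G_{ii} = a for all i, G_{i,i+1} = b, G_{i+1,i} = c, and all other entries zero. Then I − G is invertible, all entries of (I − G)⁻¹ are nonnegative, and for every fixed column index q (1 ≤ q ≤ n) the entries of (I − G)⁻¹ in column q are nonincreasing going down from row q: ((I − G)⁻¹)_{l,q} ≥ ((I − G)⁻¹)_{l+1,q} for all l with q ≤ l < n. -/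
open Matrix Finset

/-- determinant sequence of the leading principal minors of `1 - G`. -/
noncomputable def thSeq (a b c : ℝ) : ℕ → ℝ
  | 0 => 1
  | 1 => 1 - a
  | (k+2) => (1 - a) * thSeq a b c (k+1) - b * c * thSeq a b c k

lemma thSeq_rec (a b c : ℝ) (k : ℕ) :
    thSeq a b c (k+2) = (1 - a) * thSeq a b c (k+1) - b * c * thSeq a b c k := rfl

lemma thSeq_props (a b c : ℝ) (ha : 0 ≤ a) (hb : 0 ≤ b) (hc : 0 ≤ c)
    (habc : a + b + c < 1) (k : ℕ) :
    0 < thSeq a b c k ∧ c * thSeq a b c k ≤ thSeq a b c (k+1) ∧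
      (1 - a - b) * thSeq a b c k ≤ thSeq a b c (k+1) := by
  induction k with
  | zero =>
      refine ⟨one_pos, ?_, ?_⟩ <;> simp [thSeq] <;> nlinarith
  | succ k ih =>
      obtain ⟨h1, h2, h3⟩ := ih
      have hpos : 0 < thSeq a b c (k+1) := lt_of_lt_of_le (by nlinarith) h3
      refine ⟨hpos, ?_, ?_⟩
      · rw [thSeq_rec]; nlinarith
      · rw [thSeq_rec]; nlinarith

lemma thSeq_pos (a b c : ℝ) (ha : 0 ≤ a) (hb : 0 ≤ b) (hc : 0 ≤ c)
    (habc : a + b + c < 1) (k : ℕ) : 0 < thSeq a b c k :=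
  (thSeq_props a b c ha hb hc habc k).1

lemma thSeq_step (a b c : ℝ) (ha : 0 ≤ a) (hb : 0 ≤ b) (hc : 0 ≤ c)
    (habc : a + b + c < 1) (k : ℕ) : c * thSeq a b c k ≤ thSeq a b c (k+1) :=
  (thSeq_props a b c ha hb hc habc k).2.1

/-- splitting identity for determinants of tridiagonal Toeplitz matrices -/
lemma thSeq_split (a b c : ℝ) (t : ℕ) : ∀ s : ℕ,
    thSeq a b c (s + t + 2)
      = thSeq a b c (s+1) * thSeq a b c (t+1) - b * c * thSeq a b c s * thSeq a b c t := by
  induction t using Nat.twoStepInduction with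
  | zero => intro s; simp [thSeq_rec, thSeq]; ring
  | one =>
      intro s
      have e3 : thSeq a b c (s+3) = (1-a) * thSeq a b c (s+2) - b*c*thSeq a b c (s+1) :=
        thSeq_rec a b c (s+1)
      have e2 : thSeq a b c (s+2) = (1-a) * thSeq a b c (s+1) - b*c*thSeq a b c s :=
        thSeq_rec a b c s
      have f2 : thSeq a b c 2 = (1-a)*(1-a) - b*c := by
        rw [show (2:ℕ) = 0 + 2 from rfl, thSeq_rec]; simp [thSeq]
      have f1 : thSeq a b c 1 = 1 - a := rfl
      rw [show s + 1 + 2 = s + 3 from rfl, e3, e2, f2, f1]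
      ring
  | more t iht1 iht =>
      intro s
      rw [show s + (t+2) + 2 = (s + t + 2) + 2 from by ring, thSeq_rec,
        show s + t + 2 + 1 = s + (t+1) + 2 from by ring, iht s, iht1 s,
        show t + 1 + 1 = t + 2 from rfl, thSeq_rec a b c (t+1), thSeq_rec a b c t]
      ring

/-- explicit inverse of the tridiagonal Toeplitz matrix `1 - G` (0-based indices). -/
noncomputable def Mi (n : ℕ) (a b c : ℝ) (i k : ℕ) : ℝ :=
  if k ≤ i then c^(i-k) * thSeq a b c k * thSeq a b c (n-1-i) / thSeq a b c n
  else b^(k-i) * thSeq a b c i * thSeq a b c (n-1-k) / thSeq a b c n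

lemma key_nat (n : ℕ) (a b c : ℝ) (ha : 0 ≤ a) (hb : 0 ≤ b) (hc : 0 ≤ c)
    (habc : a + b + c < 1) (i k : ℕ) (hi : i < n) (hk : k < n) :
    Mi n a b c i k - (a * Mi n a b c i k
      + (if i+1 < n then b * Mi n a b c (i+1) k else 0)
      + (if 1 ≤ i then c * Mi n a b c (i-1) k else 0))
    = if i = k then 1 else 0 := by
  have hθn : thSeq a b c n ≠ 0 := ne_of_gt (thSeq_pos a b c ha hb hc habc n)
  set θ : ℕ → ℝ := thSeq a b c with hθ
  rcases Nat.lt_trichotomy i k with hik | rfl | hik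
  · -- i < k : below-diagonal column is a geometric-type relation
    obtain ⟨d, rfl⟩ : ∃ d, k = i + d + 1 := ⟨k - i - 1, by omega⟩
    obtain ⟨r, hn⟩ : ∃ r, n = (i+d+1) + r + 1 := ⟨n - (i+d+1) - 1, by omega⟩
    rw [if_neg (show ¬ (i = i+d+1) by omega)]
    have e1 : Mi n a b c i (i+d+1) = b^(d+1) * θ i * θ r / θ n := by
      unfold Mi
      rw [if_neg (by omega), show i+d+1-i = d+1 from by omega,
        show n-1-(i+d+1) = r from by omega]
    have e2 : Mi n a b c (i+1) (i+d+1) = b^d * θ (i+1) * θ r / θ n := by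
      unfold Mi
      rcases Nat.eq_zero_or_pos d with rfl | hd
      · rw [if_pos (by omega), show i+1-(i+0+1) = 0 from by omega,
          show i+0+1 = i+1 from by omega, show n-1-(i+1) = r from by omega]
        ring
      · rw [if_neg (by omega), show i+d+1-(i+1) = d from by omega,
          show n-1-(i+d+1) = r from by omega]
    rw [if_pos (show i+1 < n by omega), e1, e2]
    rcases Nat.eq_zero_or_pos i with rfl | hipos
    · rw [if_neg (show ¬ (1 ≤ 0) by omega)]
      have h0 : θ 0 = 1 := rfl
      have h1 : θ 1 = 1 - a := rfl
      field_simp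
      linear_combination (b*b^d*θ r*(1-a)) * h0 - (b*b^d*θ r) * h1
    · obtain ⟨i', rfl⟩ : ∃ i', i = i' + 1 := ⟨i - 1, by omega⟩
      rw [if_pos (show 1 ≤ i'+1 by omega)]
      have e3 : Mi n a b c (i'+1-1) (i'+1+d+1) = b^(d+2) * θ i' * θ r / θ n := by
        unfold Mi
        rw [show i'+1-1 = i' from by omega, if_neg (by omega),
          show i'+1+d+1-i' = d+2 from by omega,
          show n-1-(i'+1+d+1) = r from by omega]
      rw [e3]
      have hrec : θ (i'+2) = (1-a) * θ (i'+1) - b*c* θ i' := thSeq_rec a b c i'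
      simp only [show i'+1+1 = i'+2 from by omega]
      field_simp
      linear_combination (-b*b^d*θ r) * hrec
  · -- i = k : diagonal case
    rw [if_pos rfl]
    obtain ⟨r, hn⟩ : ∃ r, n = i + r + 1 := ⟨n - i - 1, by omega⟩
    have e1 : Mi n a b c i i = θ i * θ r / θ n := by
      unfold Mi
      rw [if_pos le_rfl, show i - i = 0 from by omega, show n-1-i = r from by omega]
      ring
    rw [e1]
    rcases Nat.eq_zero_or_pos r with rfl | hrpos
    · -- i is the last row
      rw [if_neg (show ¬ (i+1 < n) by omega)]
      rcases Nat.eq_zero_or_pos i with rfl | hipos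
      · rw [if_neg (show ¬ (1 ≤ 0) by omega)]
        have hnv : θ n = 1 - a := by rw [hn]; rfl
        have h0 : θ 0 = 1 := rfl
        have h1a : (1:ℝ) - a ≠ 0 := by nlinarith
        rw [hnv, h0]
        field_simp
        ring
      · obtain ⟨t, rfl⟩ : ∃ t, i = t + 1 := ⟨i - 1, by omega⟩
        rw [if_pos (show 1 ≤ t+1 by omega)]
        have e3 : Mi n a b c (t+1-1) (t+1) = b * θ t * θ 0 / θ n := by
          unfold Mi
          rw [show t+1-1 = t from by omega, if_neg (by omega),
            show t+1-t = 1 from by omega, show n-1-(t+1) = 0 from by omega]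
          ring
        rw [e3]
        have hrec : θ (t+2) = (1-a) * θ (t+1) - b*c* θ t := thSeq_rec a b c t
        have hnv : θ n = θ (t+2) := by rw [hn]
        have h0 : θ 0 = 1 := rfl
        have hθ2 : θ (t+2) ≠ 0 := by rw [← hnv]; exact hθn
        rw [hnv, h0]
        field_simp
        linear_combination (-1 : ℝ) * hrec
    · obtain ⟨s, rfl⟩ : ∃ s, r = s + 1 := ⟨r - 1, by omega⟩
      rw [if_pos (show i+1 < n by omega)]
      have e2 : Mi n a b c (i+1) i = c * θ i * θ s / θ n := by
        unfold Mi
        rw [if_pos (by omega), show i+1-i = 1 from by omega,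
          show n-1-(i+1) = s from by omega]
        ring
      rw [e2]
      rcases Nat.eq_zero_or_pos i with rfl | hipos
      · rw [if_neg (show ¬ (1 ≤ 0) by omega)]
        have h0 : θ 0 = 1 := rfl
        have hrec : θ (s+2) = (1-a) * θ (s+1) - b*c* θ s := thSeq_rec a b c s
        have hnv : θ n = θ (s+2) := by rw [hn]; congr 1; omega
        have hθ2 : θ (s+2) ≠ 0 := by rw [← hnv]; exact hθn
        rw [hnv, h0]
        field_simp
        linear_combination (-1 : ℝ) * hrec
      · obtain ⟨t, rfl⟩ : ∃ t, i = t + 1 := ⟨i - 1, by omega⟩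
        rw [if_pos (show 1 ≤ t+1 by omega)]
        have e3 : Mi n a b c (t+1-1) (t+1) = b * θ t * θ (s+1) / θ n := by
          unfold Mi
          rw [show t+1-1 = t from by omega, if_neg (by omega),
            show t+1-t = 1 from by omega, show n-1-(t+1) = s+1 from by omega]
          ring
        rw [e3]
        have hrec : θ (s+2) = (1-a) * θ (s+1) - b*c* θ s := thSeq_rec a b c s
        have hsplit : θ (t + (s+1) + 2) = θ (t+1) * θ (s+2) - b*c*θ t * θ (s+1) :=
          thSeq_split a b c (s+1) t
        have hnv : θ n = θ (t + (s+1) + 2) := by rw [hn]; congr 1; omega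
        have hθ2 : θ (t + (s+1) + 2) ≠ 0 := by rw [← hnv]; exact hθn
        rw [hnv]
        field_simp
        linear_combination (-(θ (t+1))) * hrec - hsplit
  · -- i > k
    obtain ⟨d, rfl⟩ : ∃ d, i = k + d + 1 := ⟨i - k - 1, by omega⟩
    obtain ⟨r, hn⟩ : ∃ r, n = (k+d+1) + r + 1 := ⟨n - (k+d+1) - 1, by omega⟩
    rw [if_neg (show ¬ (k+d+1 = k) by omega), if_pos (show 1 ≤ k+d+1 by omega)]
    have e1 : Mi n a b c (k+d+1) k = c^(d+1) * θ k * θ r / θ n := by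
      unfold Mi
      rw [if_pos (by omega), show k+d+1-k = d+1 from by omega,
        show n-1-(k+d+1) = r from by omega]
    have e3 : Mi n a b c (k+d+1-1) k = c^d * θ k * θ (r+1) / θ n := by
      unfold Mi
      rw [show k+d+1-1 = k+d from by omega, if_pos (by omega),
        show k+d-k = d from by omega, show n-1-(k+d) = r+1 from by omega]
    rw [e1, e3]
    rcases Nat.eq_zero_or_pos r with rfl | hrpos
    · rw [if_neg (show ¬ (k+d+1+1 < n) by omega)]
      have h0 : θ 0 = 1 := rfl
      have h1 : θ 1 = 1 - a := rfl
      field_simp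
      linear_combination (c*c^d*θ k*(1-a)) * h0 - (c*c^d*θ k) * h1
    · obtain ⟨s, rfl⟩ : ∃ s, r = s + 1 := ⟨r - 1, by omega⟩
      rw [if_pos (show k+d+1+1 < n by omega)]
      have e2 : Mi n a b c (k+d+1+1) k = c^(d+2) * θ k * θ s / θ n := by
        unfold Mi
        rw [if_pos (by omega), show k+d+1+1-k = d+2 from by omega,
          show n-1-(k+d+1+1) = s from by omega]
      rw [e2]
      have hrec : θ (s+2) = (1-a) * θ (s+1) - b*c* θ s := thSeq_rec a b c s
      field_simp
      linear_combination (-(c*c^d*θ k)) * hrec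

lemma fin_sum_ite (n : ℕ) (f : ℕ → ℝ) (m : ℕ) :
    (∑ j : Fin n, if (j:ℕ) = m then f (j:ℕ) else 0) = if m < n then f m else 0 := by
  have h := Fin.sum_univ_eq_sum_range (fun jn => if jn = m then f jn else 0) n
  calc (∑ j : Fin n, if (j:ℕ) = m then f (j:ℕ) else 0)
      = ∑ jn ∈ Finset.range n, (if jn = m then f jn else 0) := h
    _ = if m ∈ Finset.range n then f m else 0 := Finset.sum_ite_eq' (Finset.range n) m f
    _ = if m < n then f m else 0 := by simp [Finset.mem_range]

lemma fin_sum_ite' (n : ℕ) (f : ℕ → ℝ) (m : ℕ) :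
    (∑ j : Fin n, if (j:ℕ)+1 = m then f (j:ℕ) else 0)
      = if 1 ≤ m ∧ m-1 < n then f (m-1) else 0 := by
  have h := Fin.sum_univ_eq_sum_range (fun jn => if jn+1 = m then f jn else 0) n
  calc (∑ j : Fin n, if (j:ℕ)+1 = m then f (j:ℕ) else 0)
      = ∑ jn ∈ Finset.range n, (if jn+1 = m then f jn else 0) := h
    _ = if 1 ≤ m ∧ m-1 < n then f (m-1) else 0 := by
        rcases m with _ | m
        · simp
        · have : ∀ jn, (jn+1 = m+1) = (jn = m) := fun jn => by
            apply propext; omega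
          simp_rw [this]
          rw [Finset.sum_ite_eq' (Finset.range n) m f]
          simp [Finset.mem_range]

lemma key_mul (n : ℕ) (a b c : ℝ) (ha : 0 ≤ a) (hb : 0 ≤ b) (hc : 0 ≤ c)
    (habc : a + b + c < 1) (G : Matrix (Fin n) (Fin n) ℝ)
    (hG : ∀ i j : Fin n,
      G i j = if (i : ℕ) = (j : ℕ) then a
        else if (j : ℕ) = (i : ℕ) + 1 then b
        else if (i : ℕ) = (j : ℕ) + 1 then c
        else 0) :
    (1 - G) * (Matrix.of fun i k : Fin n => Mi n a b c (i:ℕ) (k:ℕ)) = 1 := by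
  ext i k
  rw [Matrix.mul_apply]
  have expand : ∀ j : Fin n,
      (1 - G) i j * (Matrix.of fun i k : Fin n => Mi n a b c (i:ℕ) (k:ℕ)) j k
      = (if i = j then Mi n a b c (j:ℕ) (k:ℕ) else 0) - G i j * Mi n a b c (j:ℕ) (k:ℕ) := by
    intro j
    rw [Matrix.sub_apply, Matrix.one_apply, sub_mul, ite_mul, one_mul, zero_mul]
    rfl
  rw [Finset.sum_congr rfl (fun j _ => expand j), Finset.sum_sub_distrib]
  have h1 : (∑ j : Fin n, if i = j then Mi n a b c (j:ℕ) (k:ℕ) else 0)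
      = Mi n a b c (i:ℕ) (k:ℕ) := by
    rw [Finset.sum_ite_eq]
    simp
  rw [h1]
  have hsplit : ∀ j : Fin n, G i j * Mi n a b c (j:ℕ) (k:ℕ)
      = (if (j:ℕ) = (i:ℕ) then a * Mi n a b c (j:ℕ) (k:ℕ) else 0)
      + ((if (j:ℕ) = (i:ℕ)+1 then b * Mi n a b c (j:ℕ) (k:ℕ) else 0)
      + (if (j:ℕ)+1 = (i:ℕ) then c * Mi n a b c (j:ℕ) (k:ℕ) else 0)) := by
    intro j
    rw [hG]
    split_ifs <;> first | ring1 | (exfalso; omega)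
  rw [Finset.sum_congr rfl (fun j _ => hsplit j), Finset.sum_add_distrib,
    Finset.sum_add_distrib,
    fin_sum_ite n (fun jn => a * Mi n a b c jn (k:ℕ)) (i:ℕ),
    fin_sum_ite n (fun jn => b * Mi n a b c jn (k:ℕ)) ((i:ℕ)+1),
    fin_sum_ite' n (fun jn => c * Mi n a b c jn (k:ℕ)) (i:ℕ),
    if_pos i.isLt]
  have h3 : (if 1 ≤ (i:ℕ) ∧ (i:ℕ)-1 < n then c * Mi n a b c ((i:ℕ)-1) (k:ℕ) else 0)
      = (if 1 ≤ (i:ℕ) then c * Mi n a b c ((i:ℕ)-1) (k:ℕ) else 0) := by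
    have hi := i.isLt
    by_cases h : 1 ≤ (i:ℕ)
    · rw [if_pos ⟨h, by omega⟩, if_pos h]
    · rw [if_neg (by tauto), if_neg h]
  rw [h3, Matrix.one_apply]
  have hkey := key_nat n a b c ha hb hc habc (i:ℕ) (k:ℕ) i.isLt k.isLt
  have hiff : (i = k) ↔ ((i:ℕ) = (k:ℕ)) := Fin.ext_iff
  by_cases h : i = k
  · rw [if_pos (hiff.mp h)] at hkey
    rw [if_pos h]
    linarith
  · rw [if_neg (fun hh => h (hiff.mpr hh))] at hkey
    rw [if_neg h]
    linarith

/-- Let `a, b, c ≥ 0` with `a + b + c < 1`, and let `G` be the `n × n`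
tridiagonal Toeplitz matrix with `a` on the diagonal, `b` on the superdiagonal and `c` on
the subdiagonal. Then `I - G` is invertible, `(I - G)⁻¹` is entrywise nonnegative, and for
each fixed column `q` the entries of column `q` of `(I - G)⁻¹` are nonincreasing going down
from row `q`. -/
theorem stmt4 (n : ℕ) (a b c : ℝ) (ha : 0 ≤ a) (hb : 0 ≤ b) (hc : 0 ≤ c)
    (habc : a + b + c < 1) (G : Matrix (Fin n) (Fin n) ℝ)
    (hG : ∀ i j : Fin n,
      G i j = if (i : ℕ) = (j : ℕ) then a
        else if (j : ℕ) = (i : ℕ) + 1 then b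
        else if (i : ℕ) = (j : ℕ) + 1 then c
        else 0) :
    IsUnit (1 - G) ∧
    (∀ i j : Fin n, 0 ≤ (1 - G)⁻¹ i j) ∧
    (∀ (q l : Fin n) (hl : (l : ℕ) + 1 < n), q ≤ l →
      (1 - G)⁻¹ ⟨(l : ℕ) + 1, hl⟩ q ≤ (1 - G)⁻¹ l q) := by
  have hmul := key_mul n a b c ha hb hc habc G hG
  have hinv : Invertible (1 - G) := invertibleOfRightInverse _ _ hmul
  have hunit : IsUnit (1 - G) := isUnit_of_invertible _
  have hinveq : (1 - G)⁻¹ = Matrix.of fun i k : Fin n => Mi n a b c (i:ℕ) (k:ℕ) :=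
    Matrix.inv_eq_right_inv hmul
  have hθpos : ∀ m : ℕ, 0 < thSeq a b c m := thSeq_pos a b c ha hb hc habc
  refine ⟨hunit, ?_, ?_⟩
  · intro i j
    rw [hinveq]
    show 0 ≤ Mi n a b c (i:ℕ) (j:ℕ)
    unfold Mi
    split_ifs
    · exact div_nonneg (mul_nonneg (mul_nonneg (pow_nonneg hc _) (hθpos _).le)
        (hθpos _).le) (hθpos _).le
    · exact div_nonneg (mul_nonneg (mul_nonneg (pow_nonneg hb _) (hθpos _).le)
        (hθpos _).le) (hθpos _).le
  · intro q l hl hql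
    rw [hinveq]
    have hql' : (q:ℕ) ≤ (l:ℕ) := hql
    show Mi n a b c ((l:ℕ)+1) (q:ℕ) ≤ Mi n a b c (l:ℕ) (q:ℕ)
    unfold Mi
    rw [if_pos (show (q:ℕ) ≤ (l:ℕ)+1 by omega), if_pos hql']
    obtain ⟨e, he⟩ : ∃ e, n-1-(l:ℕ) = e+1 := ⟨n-2-(l:ℕ), by omega⟩
    have he' : n-1-((l:ℕ)+1) = e := by omega
    obtain ⟨d, hd⟩ : ∃ d, (l:ℕ)-(q:ℕ) = d := ⟨_, rfl⟩
    have hd' : (l:ℕ)+1-(q:ℕ) = d+1 := by omega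
    rw [he, he', hd, hd']
    rw [div_le_div_iff_of_pos_right (hθpos n)]
    have step := thSeq_step a b c ha hb hc habc e
    have hnn : 0 ≤ c^d * thSeq a b c (q:ℕ) :=
      mul_nonneg (pow_nonneg hc d) (hθpos _).le
    calc c^(d+1) * thSeq a b c (q:ℕ) * thSeq a b c e
        = c^d * thSeq a b c (q:ℕ) * (c * thSeq a b c e) := by ring
      _ ≤ c^d * thSeq a b c (q:ℕ) * thSeq a b c (e+1) :=
          mul_le_mul_of_nonneg_left step hnn
end

section
/- Let a, b, c ≥ 0 be real numbers with a + c > 1, and let G be the n×n tridiagonal Toeplitz matrix with G_{ii} = a, G_{i,i+1} = b, G_{i+1,i} = c, and all other entries zero. Assume the spectral radius of G is strictly less than 1. Then for every column index q and every row index l with q < l ≤ n, the entries of (I − G)⁻¹ satisfy ((I − G)⁻¹)_{l,q} ≥ ((I − G)⁻¹)_{q,q}. -/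
open Matrix
open scoped ENNReal NNReal

attribute [local instance] Matrix.linftyOpNormedAddCommGroup Matrix.linftyOpNormedRing
  Matrix.linftyOpNormedAlgebra

private lemma matCompl (n : ℕ) : CompleteSpace (Matrix (Fin n) (Fin n) ℝ) :=
  by infer_instance

private lemma entry_norm_le_s5 {n : ℕ} (A : Matrix (Fin n) (Fin n) ℝ) (i j : Fin n) :
    ‖A i j‖ ≤ ‖A‖ := by
  have h1 : ‖A i j‖₊ ≤ ∑ j' : Fin n, ‖A i j'‖₊ :=
    Finset.single_le_sum (f := fun j' => ‖A i j'‖₊) (fun _ _ => zero_le) (Finset.mem_univ j)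
  have h2 : (∑ j' : Fin n, ‖A i j'‖₊) ≤ Finset.univ.sup fun i' : Fin n => ∑ j' : Fin n, ‖A i' j'‖₊ :=
    Finset.le_sup (f := fun i' : Fin n => ∑ j' : Fin n, ‖A i' j'‖₊) (Finset.mem_univ i)
  rw [Matrix.linfty_opNorm_def]
  exact_mod_cast h1.trans h2

private lemma key_nonneg {n : ℕ} (hn : 0 < n) (G : Matrix (Fin n) (Fin n) ℝ)
    (hGnn : ∀ i j, 0 ≤ G i j)
    (hsr : ∀ μ ∈ spectrum ℂ (G.map (Complex.ofReal)), ‖μ‖ < 1) :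
    (1 - G) * (1 - G)⁻¹ = 1 ∧ ∀ i j, 0 ≤ (1 - G)⁻¹ i j := by
  haveI : Nonempty (Fin n) := ⟨⟨0, hn⟩⟩
  haveI := matCompl n
  haveI : CompleteSpace (Matrix (Fin n) (Fin n) ℂ) :=
    by infer_instance
  set B : Matrix (Fin n) (Fin n) ℂ := G.map Complex.ofReal with hB
  -- entries of powers are nonnegative
  have hpow : ∀ m : ℕ, ∀ i j, 0 ≤ (G ^ m) i j := by
    intro m
    induction m with
    | zero =>
      intro i j
      rw [pow_zero, Matrix.one_apply]
      split_ifs <;> norm_num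
    | succ m ih =>
      intro i j
      rw [pow_succ, Matrix.mul_apply]
      exact Finset.sum_nonneg fun p _ => mul_nonneg (ih i p) (hGnn p j)
  have hmp : ∀ m : ℕ, B ^ m = (G ^ m).map Complex.ofReal := by
    intro m
    have h := map_pow (Complex.ofRealHom.mapMatrix (m := Fin n)) G m
    simp only [RingHom.mapMatrix_apply] at h; exact h.symm
  have hnormeq : ∀ m : ℕ, ‖B ^ m‖₊ = ‖G ^ m‖₊ := by
    intro m
    rw [hmp, Matrix.linfty_opNNNorm_def, Matrix.linfty_opNNNorm_def]
    simp [Matrix.map_apply]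
  have hρ : spectralRadius ℂ B < 1 := by
    have h := spectrum.spectralRadius_lt_of_forall_lt (a := B) (r := 1) ?_
    · simpa using h
    · intro z hz
      have h1 : (‖z‖₊ : ℝ) < 1 := by simpa using hsr z hz
      exact_mod_cast h1
  obtain ⟨k, hk_lt, hk1⟩ :=
    (((spectrum.pow_nnnorm_pow_one_div_tendsto_nhds_spectralRadius B).eventually_lt_const
      hρ).and (Filter.eventually_ge_atTop 1)).exists
  have hk0 : (k : ℝ) ≠ 0 := Nat.cast_ne_zero.mpr (by omega)
  have hBk : (‖B ^ k‖₊ : ℝ≥0∞) < 1 := by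
    have hkpos : (0 : ℝ) < (k : ℝ) := by positivity
    have h2 := ENNReal.rpow_lt_one hk_lt hkpos
    rwa [← ENNReal.rpow_mul, one_div_mul_cancel hk0, ENNReal.rpow_one] at h2
  have hGk : ‖G ^ k‖ < 1 := by
    have h3 : ‖G ^ k‖₊ < 1 := by
      rw [← hnormeq k]
      exact_mod_cast hBk
    exact_mod_cast h3
  have hsum : Summable fun m : ℕ => (G ^ k) ^ m := summable_geometric_of_norm_lt_one hGk
  set T := ∑' m : ℕ, (G ^ k) ^ m with hT
  have hTmul : (1 - G ^ k) * T = 1 := mul_neg_geom_series _ hGk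
  have hTnn : ∀ i j, 0 ≤ T i j := by
    intro i j
    let e : Matrix (Fin n) (Fin n) ℝ →L[ℝ] ℝ :=
      LinearMap.mkContinuous (Matrix.entryLinearMap ℝ ℝ i j) 1
        (fun A => by simpa using entry_norm_le_s5 A i j)
    have h1 : HasSum (fun m => e ((G ^ k) ^ m)) (e T) := e.hasSum hsum.hasSum
    have h2 : 0 ≤ ∑' m : ℕ, e ((G ^ k) ^ m) := by
      refine tsum_nonneg fun m => ?_
      show (0 : ℝ) ≤ ((G ^ k) ^ m) i j
      rw [← pow_mul]
      exact hpow (k * m) i j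
    rw [h1.tsum_eq] at h2
    exact h2
  set S := ∑ r ∈ Finset.range k, G ^ r with hS
  have hSnn : ∀ i j, 0 ≤ S i j := by
    intro i j
    rw [hS, Matrix.sum_apply]
    exact Finset.sum_nonneg fun r _ => hpow r i j
  have hST : (1 - G) * (S * T) = 1 := by
    rw [← mul_assoc, hS, mul_neg_geom_sum, hTmul]
  have hNinv : (1 - G)⁻¹ = S * T := Matrix.inv_eq_right_inv hST
  refine ⟨by rw [hNinv]; exact hST, ?_⟩
  intro i j
  rw [hNinv, Matrix.mul_apply]
  exact Finset.sum_nonneg fun p _ => mul_nonneg (hSnn i p) (hTnn p j)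

/-- Let `a, b, c ≥ 0` with `a + c > 1`, let `G` be the `n × n` tridiagonal
Toeplitz matrix with `a` on the diagonal, `b` on the superdiagonal and `c` on the
subdiagonal, and assume the spectral radius of `G` is `< 1` (every complex eigenvalue has
modulus `< 1`). Then for every column `q` and every row `l > q`,
`((I - G)⁻¹)_{l,q} ≥ ((I - G)⁻¹)_{q,q}`. -/
theorem stmt5 (n : ℕ) (a b c : ℝ) (ha : 0 ≤ a) (hb : 0 ≤ b) (hc : 0 ≤ c)
    (hac : 1 < a + c) (G : Matrix (Fin n) (Fin n) ℝ)
    (hG : ∀ i j : Fin n,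
      G i j = if (i : ℕ) = (j : ℕ) then a
        else if (j : ℕ) = (i : ℕ) + 1 then b
        else if (i : ℕ) = (j : ℕ) + 1 then c
        else 0)
    (hsr : ∀ μ ∈ spectrum ℂ (G.map (Complex.ofReal)), ‖μ‖ < 1) :
    ∀ q l : Fin n, q < l → (1 - G)⁻¹ q q ≤ (1 - G)⁻¹ l q := by
  intro q l hql
  have hn : 0 < n := lt_of_le_of_lt (Nat.zero_le _) q.isLt
  have hGnn : ∀ i j, 0 ≤ G i j := by
    intro i j
    rw [hG]
    split_ifs <;> first | exact ha | exact hb | exact hc | exact le_refl 0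
  obtain ⟨hEq, hNnn⟩ := key_nonneg hn G hGnn hsr
  set N := (1 - G)⁻¹ with hN
  set x : Fin n → ℝ := fun i => N i q with hx
  have hxnn : ∀ p, 0 ≤ x p := fun p => hNnn p q
  have hrow : ∀ i : Fin n, x i - ∑ p, G i p * x p = (if i = q then (1 : ℝ) else 0) := by
    intro i
    have h : ((1 - G) * N) i q = (1 : Matrix (Fin n) (Fin n) ℝ) i q := by rw [hEq]
    rw [Matrix.mul_apply] at h
    simp only [Matrix.sub_apply, Matrix.one_apply, sub_mul, Finset.sum_sub_distrib, ite_mul,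
      one_mul, zero_mul, Finset.sum_ite_eq, Finset.mem_univ, if_true] at h
    exact h
  have hq : x q - ∑ p, G q p * x p = 1 := by simpa using hrow q
  have hGqq : G q q = a := by rw [hG]; simp
  have hsum_ge : a * x q ≤ ∑ p, G q p * x p := by
    have h := Finset.single_le_sum (f := fun p => G q p * x p)
      (fun p _ => mul_nonneg (hGnn q p) (hxnn p)) (Finset.mem_univ q)
    simpa [hGqq] using h
  have ha1 : a < 1 := by
    by_contra hcon
    push_neg at hcon
    nlinarith [hxnn q, hsum_ge, hq]
  -- the one-step inequality
  have hstep : ∀ i : Fin n, q < i → ∀ p : Fin n, (p : ℕ) + 1 = (i : ℕ) → x p ≤ x i := by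
    intro i hi p hp1
    have hiq : i ≠ q := ne_of_gt hi
    have hr : x i = ∑ p', G i p' * x p' := by
      have h := hrow i
      rw [if_neg hiq] at h
      linarith
    have hpi : p ≠ i := Fin.ne_of_val_ne (by omega)
    have hpair : G i p * x p + G i i * x i ≤ ∑ p', G i p' * x p' := by
      calc G i p * x p + G i i * x i
          = ∑ p' ∈ ({p, i} : Finset (Fin n)), G i p' * x p' := (Finset.sum_pair (f := fun p' => G i p' * x p') hpi).symm
        _ ≤ ∑ p', G i p' * x p' :=
          Finset.sum_le_sum_of_subset_of_nonneg (Finset.subset_univ _)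
            (fun j' _ _ => mul_nonneg (hGnn i j') (hxnn j'))
    have hGip : G i p = c := by
      rw [hG]
      rw [if_neg (by omega), if_neg (by omega), if_pos (by omega)]
    have hGii : G i i = a := by rw [hG]; simp
    rw [hGip, hGii] at hpair
    rw [← hr] at hpair
    nlinarith [hxnn p, hxnn i]
  -- chain the inequalities
  have main : ∀ m : ℕ, ∀ l' : Fin n, (l' : ℕ) = m → q < l' → x q ≤ x l' := by
    intro m
    induction m using Nat.strong_induction_on with
    | _ m ih =>
      intro l' hm hql'
      have hql'' : (q : ℕ) < (l' : ℕ) := hql'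
      have h1 : 1 ≤ (l' : ℕ) := by omega
      set p : Fin n := ⟨(l' : ℕ) - 1, by omega⟩ with hp
      have hpv : (p : ℕ) = (l' : ℕ) - 1 := rfl
      have hpl : x p ≤ x l' := hstep l' hql' p (by omega)
      rcases eq_or_ne q p with h | h
      · rw [h]; exact hpl
      · have hqv : (q : ℕ) ≠ (p : ℕ) := fun hh => h (Fin.ext hh)
        have hqp : q < p := by
          show (q : ℕ) < (p : ℕ)
          omega
        exact le_trans (ih (p : ℕ) (by omega) p rfl hqp) hpl
  exact main (l : ℕ) l rfl hql
end

section
/- Let γ denote the standard Gaussian measure on ℝ (mean 0, variance 1), and for t ≥ 0 define Q(t) = γ({x ∈ ℝ : x² ≥ t}), the tail probability of a chi-squared random variable with one degree of freedom. Define τ(R) = (log R)/(R − 1) for R > 1. Then the function P(R) = ½·(1 − Q(τ(R))) + ½·Q(R·τ(R)) is strictly decreasing on (1, ∞). -/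
open ProbabilityTheory

private lemma Q_strictAnti_aux {s t : ℝ} (hs : 0 ≤ s) (hst : s < t) :
    ((gaussianReal 0 1) {x : ℝ | t ≤ x ^ 2}).toReal
      < ((gaussianReal 0 1) {x : ℝ | s ≤ x ^ 2}).toReal := by
  set γ := gaussianReal 0 1
  have hAB : {x : ℝ | t ≤ x ^ 2} ⊆ {x : ℝ | s ≤ x ^ 2} := fun x hx => le_trans hst.le hx
  have hIoo : Set.Ioo (Real.sqrt s) (Real.sqrt t) ⊆ {x : ℝ | s ≤ x ^ 2} \ {x : ℝ | t ≤ x ^ 2} := by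
    rintro x ⟨h1, h2⟩
    have hx0 : 0 ≤ x := le_trans (Real.sqrt_nonneg s) h1.le
    constructor
    · show s ≤ x ^ 2
      nlinarith [Real.sq_sqrt hs, Real.sqrt_nonneg s]
    · show ¬ t ≤ x ^ 2
      push_neg
      nlinarith [Real.sq_sqrt (le_trans hs hst.le), Real.sqrt_nonneg t]
  have hpos : 0 < γ (Set.Ioo (Real.sqrt s) (Real.sqrt t)) := by
    rw [pos_iff_ne_zero]
    intro h
    have := (ProbabilityTheory.gaussianReal_absolutelyContinuous' 0 one_ne_zero) h
    rw [Real.volume_Ioo] at this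
    have hlt : Real.sqrt s < Real.sqrt t := Real.sqrt_lt_sqrt hs hst
    simp only [ENNReal.ofReal_eq_zero] at this
    linarith
  have key : γ {x : ℝ | t ≤ x ^ 2} < γ {x : ℝ | s ≤ x ^ 2} := by
    calc γ {x : ℝ | t ≤ x ^ 2}
        < γ {x : ℝ | t ≤ x ^ 2} + γ (Set.Ioo (Real.sqrt s) (Real.sqrt t)) :=
          ENNReal.lt_add_right (MeasureTheory.measure_ne_top _ _) hpos.ne'
      _ = γ ({x : ℝ | t ≤ x ^ 2} ∪ Set.Ioo (Real.sqrt s) (Real.sqrt t)) := by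
          rw [MeasureTheory.measure_union (by
            rw [disjoint_comm]
            exact Set.disjoint_left.mpr fun x hx => (hIoo hx).2) (measurableSet_Ioo)]
      _ ≤ γ {x : ℝ | s ≤ x ^ 2} :=
          MeasureTheory.measure_mono (Set.union_subset hAB (fun x hx => (hIoo hx).1))
  exact (ENNReal.toReal_lt_toReal (MeasureTheory.measure_ne_top _ _)
    (MeasureTheory.measure_ne_top _ _)).mpr key

private lemma tau_anti_aux : StrictAntiOn (fun R : ℝ => Real.log R / (R - 1)) (Set.Ioi 1) := by
  apply strictAntiOn_of_deriv_neg (convex_Ioi 1)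
  · apply ContinuousOn.div (Real.continuousOn_log.mono (by
      intro x hx; simp at hx ⊢; linarith)) (by fun_prop)
    intro x hx; simp at hx; intro h; linarith [sub_eq_zero.mp h]
  · intro x hx
    rw [interior_Ioi] at hx
    simp only [Set.mem_Ioi] at hx
    have hd : HasDerivAt (fun R : ℝ => Real.log R / (R - 1))
        ((x⁻¹ * (x - 1) - Real.log x * 1) / (x - 1) ^ 2) x :=
      (Real.hasDerivAt_log (by linarith)).div ((hasDerivAt_id x).sub_const 1) (by linarith)
    rw [hd.deriv]
    have hlog : 1 - x⁻¹ < Real.log x := by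
      have h := Real.log_lt_sub_one_of_pos (x := x⁻¹) (by positivity) (by
        intro h; rw [inv_eq_one] at h; linarith)
      rw [Real.log_inv] at h; linarith
    have hx0 : (0:ℝ) < x := by linarith
    apply div_neg_of_neg_of_pos
    · have : x⁻¹ * (x - 1) = 1 - x⁻¹ := by field_simp
      rw [this]; linarith
    · exact pow_pos (by linarith) 2

private lemma rtau_mono_aux :
    StrictMonoOn (fun R : ℝ => R * (Real.log R / (R - 1))) (Set.Ioi 1) := by
  apply strictMonoOn_of_deriv_pos (convex_Ioi 1)
  · apply ContinuousOn.mul (by fun_prop)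
    apply ContinuousOn.div (Real.continuousOn_log.mono (by
      intro x hx; simp at hx ⊢; linarith)) (by fun_prop)
    intro x hx; simp at hx; intro h; linarith [sub_eq_zero.mp h]
  · intro x hx
    rw [interior_Ioi] at hx
    simp only [Set.mem_Ioi] at hx
    have hx0 : (0:ℝ) < x := by linarith
    have hfun : (fun R : ℝ => R * (Real.log R / (R - 1)))
        = fun R : ℝ => (R * Real.log R) / (R - 1) := by
      funext R; ring
    rw [hfun]
    have hd : HasDerivAt (fun R : ℝ => (R * Real.log R) / (R - 1))
        (((1 * Real.log x + x * x⁻¹) * (x - 1) - x * Real.log x * 1) / (x - 1) ^ 2) x :=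
      (((hasDerivAt_id x).mul (Real.hasDerivAt_log (by linarith)))).div
        ((hasDerivAt_id x).sub_const 1) (by linarith)
    rw [hd.deriv]
    have hlog : Real.log x < x - 1 := Real.log_lt_sub_one_of_pos hx0 (by linarith)
    have hxx : x * x⁻¹ = 1 := mul_inv_cancel₀ hx0.ne'
    apply div_pos
    · rw [hxx]; nlinarith
    · exact pow_pos (by linarith) 2

/-- Let `γ` be the standard Gaussian measure on `ℝ`, let
`Q(t) = γ({x : x² ≥ t})` (the tail of a chi-squared law with one degree of freedom) and
`τ(R) = (log R)/(R - 1)` for `R > 1`. Then `P(R) = ½(1 - Q(τ(R))) + ½ Q(R τ(R))` is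
strictly decreasing on `(1, ∞)`. -/
theorem stmt11 :
    StrictAntiOn (fun R : ℝ =>
      (1 / 2 : ℝ) *
          (1 - ((gaussianReal 0 1) {x : ℝ | Real.log R / (R - 1) ≤ x ^ 2}).toReal) +
        (1 / 2 : ℝ) *
          ((gaussianReal 0 1) {x : ℝ | R * (Real.log R / (R - 1)) ≤ x ^ 2}).toReal)
      (Set.Ioi 1) := by
  intro a ha b hb hab
  simp only [Set.mem_Ioi] at ha hb
  have hb0 : (0:ℝ) < b := by linarith
  have hτb_pos : 0 < Real.log b / (b - 1) :=
    div_pos (Real.log_pos hb) (by linarith)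
  have hτ : Real.log b / (b - 1) < Real.log a / (a - 1) :=
    tau_anti_aux (Set.mem_Ioi.mpr ha) (Set.mem_Ioi.mpr hb) hab
  have hga_pos : 0 < a * (Real.log a / (a - 1)) :=
    mul_pos (by linarith) (div_pos (Real.log_pos ha) (by linarith))
  have hg : a * (Real.log a / (a - 1)) < b * (Real.log b / (b - 1)) :=
    rtau_mono_aux (Set.mem_Ioi.mpr ha) (Set.mem_Ioi.mpr hb) hab
  have h1 : ((gaussianReal 0 1) {x : ℝ | Real.log a / (a - 1) ≤ x ^ 2}).toReal
      < ((gaussianReal 0 1) {x : ℝ | Real.log b / (b - 1) ≤ x ^ 2}).toReal :=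
    Q_strictAnti_aux hτb_pos.le hτ
  have h2 : ((gaussianReal 0 1) {x : ℝ | b * (Real.log b / (b - 1)) ≤ x ^ 2}).toReal
      < ((gaussianReal 0 1) {x : ℝ | a * (Real.log a / (a - 1)) ≤ x ^ 2}).toReal :=
    Q_strictAnti_aux hga_pos.le hg
  simp only
  linarith
end

section
/- Let A and B be real symmetric positive semidefinite r×r matrices such that A − B is positive semidefinite, and let σ² > 0. Then for every μ ∈ ℝ^r, μᵀ (A + σ²I)⁻¹ A μ ≥ μᵀ (B + σ²I)⁻¹ B μ. -/
open Matrix Finset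

variable {r : ℕ}

lemma dot_cs (f g : Fin r → ℝ) : (f ⬝ᵥ g) ^ 2 ≤ (f ⬝ᵥ f) * (g ⬝ᵥ g) := by
  have := Finset.sum_mul_sq_le_sq_mul_sq Finset.univ f g
  simpa [dotProduct, sq] using this


lemma smul_one_posDef {σ2 : ℝ} (hσ2 : 0 < σ2) :
    (σ2 • (1 : Matrix (Fin r) (Fin r) ℝ)).PosDef := by
  refine Matrix.PosDef.of_dotProduct_mulVec_pos ?_ ?_
  · simp [Matrix.IsHermitian]
  · intro x hx
    have hxx : 0 < x ⬝ᵥ x := by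
      have hne : x ⬝ᵥ x ≠ 0 := fun h => hx (dotProduct_self_eq_zero.mp h)
      have hge : 0 ≤ x ⬝ᵥ x := Finset.sum_nonneg fun i _ => mul_self_nonneg (x i)
      exact lt_of_le_of_ne hge (Ne.symm hne)
    simpa [smul_mulVec, dotProduct_smul] using mul_pos hσ2 hxx

/-- Cauchy–Schwarz for a real PSD matrix. -/
lemma psd_cauchy_schwarz {N : Matrix (Fin r) (Fin r) ℝ} (hN : N.PosSemidef)
    (y z : Fin r → ℝ) :
    (y ⬝ᵥ N.mulVec z) ^ 2 ≤ (y ⬝ᵥ N.mulVec y) * (z ⬝ᵥ N.mulVec z) := by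
  obtain ⟨Q, hQ, rfl⟩ : ∃ Q : Matrix (Fin r) (Fin r) ℝ, Qᵀ = Q ∧ Q * Q = N :=
    by open scoped MatrixOrder in exact ⟨CFC.sqrt N, by simpa [Matrix.IsHermitian] using (CFC.sqrt_nonneg N).posSemidef.1,
      CFC.sqrt_mul_sqrt_self N hN.nonneg⟩
  have key : ∀ u v : Fin r → ℝ, u ⬝ᵥ (Q * Q).mulVec v = (Q.mulVec u) ⬝ᵥ (Q.mulVec v) := by
    intro u v
    rw [← mulVec_mulVec, dotProduct_mulVec, ← mulVec_transpose, hQ]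
  rw [key, key, key]
  exact dot_cs _ _

/-- Inverse is antitone on positive definite matrices (quadratic form version). -/
lemma inv_quad_antitone {M N : Matrix (Fin r) (Fin r) ℝ} (hM : M.PosDef) (hN : N.PosDef)
    (hMN : (M - N).PosSemidef) (x : Fin r → ℝ) :
    x ⬝ᵥ M⁻¹.mulVec x ≤ x ⬝ᵥ N⁻¹.mulVec x := by
  set y := M⁻¹.mulVec x with hy
  set z := N⁻¹.mulVec x with hz
  have hMy : M.mulVec y = x := by
    rw [hy, mulVec_mulVec, Matrix.mul_nonsing_inv _ (isUnit_iff_ne_zero.mpr hM.det_pos.ne'), one_mulVec]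
  have hNz : N.mulVec z = x := by
    rw [hz, mulVec_mulVec, Matrix.mul_nonsing_inv _ (isUnit_iff_ne_zero.mpr hN.det_pos.ne'), one_mulVec]
  set t := x ⬝ᵥ y with ht
  set s := x ⬝ᵥ z with hs
  have ht0 : 0 ≤ t := by simpa using hM.inv.posSemidef.dotProduct_mulVec_nonneg x
  have hs0 : 0 ≤ s := by simpa using hN.inv.posSemidef.dotProduct_mulVec_nonneg x
  have hyNz : y ⬝ᵥ N.mulVec z = t := by rw [hNz, ht, dotProduct_comm]
  have hyNy : y ⬝ᵥ N.mulVec y ≤ t := by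
    have h1 : 0 ≤ y ⬝ᵥ (M - N).mulVec y := by simpa using hMN.dotProduct_mulVec_nonneg y
    have h2 : y ⬝ᵥ M.mulVec y = t := by rw [hMy, ht, dotProduct_comm]
    rw [sub_mulVec, dotProduct_sub, sub_nonneg, h2] at h1
    exact h1
  have hzNz : z ⬝ᵥ N.mulVec z = s := by rw [hNz, hs, dotProduct_comm]
  have cs := psd_cauchy_schwarz hN.posSemidef y z
  rw [hyNz, hzNz] at cs
  rcases eq_or_lt_of_le ht0 with h | h
  · rw [← h]; exact hs0
  · have : t ^ 2 ≤ t * s := le_trans cs (by nlinarith)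
    nlinarith

lemma key_lemma (S : Matrix (Fin r) (Fin r) ℝ) (hS : S.PosSemidef) (σ2 : ℝ) (hσ2 : 0 < σ2) :
    (S + σ2 • (1 : Matrix (Fin r) (Fin r) ℝ))⁻¹ * S =
      1 - σ2 • (S + σ2 • (1 : Matrix (Fin r) (Fin r) ℝ))⁻¹ := by
  have hPD : (S + σ2 • (1 : Matrix (Fin r) (Fin r) ℝ)).PosDef :=
    Matrix.PosDef.posSemidef_add hS (smul_one_posDef hσ2)
  have h := Matrix.nonsing_inv_mul _ (isUnit_iff_ne_zero.mpr hPD.det_pos.ne')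
  calc (S + σ2 • (1 : Matrix (Fin r) (Fin r) ℝ))⁻¹ * S
      = (S + σ2 • 1)⁻¹ * ((S + σ2 • 1) - σ2 • 1) := by rw [add_sub_cancel_right]
    _ = 1 - σ2 • (S + σ2 • 1)⁻¹ := by
        rw [Matrix.mul_sub, h, Matrix.mul_smul, Matrix.mul_one]

/-- Let `A, B` be real symmetric positive semidefinite `r × r` matrices
with `A - B` positive semidefinite, and let `σ² > 0`. Then for every `μ ∈ ℝ^r`,
`μᵀ (A + σ²I)⁻¹ A μ ≥ μᵀ (B + σ²I)⁻¹ B μ`. -/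
theorem stmt13 (r : ℕ) (A B : Matrix (Fin r) (Fin r) ℝ)
    (hA : A.PosSemidef) (hB : B.PosSemidef) (hAB : (A - B).PosSemidef)
    (σ2 : ℝ) (hσ2 : 0 < σ2) :
    ∀ μ : Fin r → ℝ,
      μ ⬝ᵥ ((B + σ2 • (1 : Matrix (Fin r) (Fin r) ℝ))⁻¹ * B).mulVec μ ≤
        μ ⬝ᵥ ((A + σ2 • (1 : Matrix (Fin r) (Fin r) ℝ))⁻¹ * A).mulVec μ := by
  intro μ
  have hI : (σ2 • (1 : Matrix (Fin r) (Fin r) ℝ)).PosDef := smul_one_posDef (r := r) hσ2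
  have hA' : (A + σ2 • (1 : Matrix (Fin r) (Fin r) ℝ)).PosDef := Matrix.PosDef.posSemidef_add hA hI
  have hB' : (B + σ2 • (1 : Matrix (Fin r) (Fin r) ℝ)).PosDef := Matrix.PosDef.posSemidef_add hB hI
  have hdiff : ((A + σ2 • (1 : Matrix (Fin r) (Fin r) ℝ)) - (B + σ2 • 1)).PosSemidef := by
    have : (A + σ2 • (1 : Matrix (Fin r) (Fin r) ℝ)) - (B + σ2 • 1) = A - B :=
      add_sub_add_right_eq_sub A B _
    rw [this]; exact hAB
  have hmain := inv_quad_antitone hA' hB' hdiff μ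
  rw [key_lemma A hA σ2 hσ2, key_lemma B hB σ2 hσ2]
  simp only [sub_mulVec, one_mulVec, dotProduct_sub, smul_mulVec, dotProduct_smul,
    smul_eq_mul]
  have := mul_le_mul_of_nonneg_left hmain hσ2.le
  linarith
end

section
/- Let the index set of a real n×n matrix G be partitioned into disjoint sets S, C, P with the (P, S) block of G equal to zero, and assume I − G and I_P − G_{PP} are invertible. Let E be a real n×r matrix whose rows indexed by C and by P are all zero, set R = (I − G)⁻¹ E, and let R_C and R_P denote the submatrices of R consisting of the rows indexed by C and by P, respectively. Let T = (I_P − G_{PP})⁻¹ G_{PC} and let σ² > 0. Define, for μ ∈ ℝ^r, η_C²(μ) = μᵀ (R_Cᵀ R_C + σ²I)⁻¹ R_Cᵀ R_C μ and η_P²(μ) = μᵀ (R_Pᵀ R_P + σ²I)⁻¹ R_Pᵀ R_P μ. Then: (a) if the largest singular value of T is at most 1, then η_C²(μ) ≥ η_P²(μ) for all μ ∈ ℝ^r; (b) if the smallest singular value of T is strictly greater than 1 and R_C μ ≠ 0, then η_P²(μ) > η_C²(μ). -/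
open Matrix

/-- The squared SNR `μᵀ (Rᵀ R + σ² I)⁻¹ Rᵀ R μ` of the MAP detector for the mean shift
model with (row-restricted) zero-frequency gain matrix `R` and noise variance `σ²`. -/
noncomputable def etaSq {m : Type*} [Fintype m] {r : ℕ}
    (R : Matrix m (Fin r) ℝ) (σ2 : ℝ) (μ : Fin r → ℝ) : ℝ :=
  μ ⬝ᵥ ((Rᵀ * R + σ2 • (1 : Matrix (Fin r) (Fin r) ℝ))⁻¹ * (Rᵀ * R)).mulVec μ

private lemma dot_self_nonneg' {n : Type*} [Fintype n] (v : n → ℝ) : 0 ≤ v ⬝ᵥ v :=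
  Finset.sum_nonneg fun _ _ => mul_self_nonneg _

private lemma dot_self_pos' {n : Type*} [Fintype n] {v : n → ℝ} (hv : v ≠ 0) :
    0 < v ⬝ᵥ v := by
  rcases (dot_self_nonneg' v).lt_or_eq with h | h
  · exact h
  · exact absurd (dotProduct_self_eq_zero.mp h.symm) hv

/-- quadratic form of `Rᵀ R + σ² I`. -/
private lemma qf_eq {m : Type*} [Fintype m] {r : ℕ} (R : Matrix m (Fin r) ℝ)
    (σ2 : ℝ) (v : Fin r → ℝ) :
    v ⬝ᵥ (Rᵀ * R + σ2 • (1 : Matrix (Fin r) (Fin r) ℝ)).mulVec v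
      = (R.mulVec v) ⬝ᵥ (R.mulVec v) + σ2 * (v ⬝ᵥ v) := by
  rw [add_mulVec, dotProduct_add, ← mulVec_mulVec, dotProduct_mulVec,
    vecMul_transpose, smul_mulVec, one_mulVec, dotProduct_smul, smul_eq_mul]

private lemma posdef_A {m : Type*} [Fintype m] {r : ℕ} (R : Matrix m (Fin r) ℝ)
    {σ2 : ℝ} (hσ2 : 0 < σ2) :
    (Rᵀ * R + σ2 • (1 : Matrix (Fin r) (Fin r) ℝ)).PosDef := by
  refine posDef_iff_dotProduct_mulVec.mpr ⟨?_, ?_⟩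
  · have h1 : (Rᵀ * R).IsHermitian := by
      have := isHermitian_conjTranspose_mul_self R
      rwa [conjTranspose_eq_transpose_of_trivial] at this
    have h2 : (σ2 • (1 : Matrix (Fin r) (Fin r) ℝ)).IsHermitian := by
      unfold Matrix.IsHermitian
      rw [conjTranspose_eq_transpose_of_trivial, transpose_smul, transpose_one]
    exact h1.add h2
  · intro x hx
    have hs : star x = x := by funext i; simp
    rw [hs, qf_eq]
    have h1 := dot_self_pos' hx
    have h2 := dot_self_nonneg' (R.mulVec x)
    nlinarith

/-- Key monotonicity inequality for inverse quadratic forms: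
`μᵀ B⁻¹ μ ≥ μᵀ A⁻¹ μ + xᵀ (A - B) x` with `x = A⁻¹ μ`. -/
private lemma inv_qf_ge {n : Type*} [Fintype n] [DecidableEq n]
    {A B : Matrix n n ℝ} (hA : A.PosDef) (hB : B.PosDef) (μ : n → ℝ) :
    μ ⬝ᵥ A⁻¹.mulVec μ + (A⁻¹.mulVec μ) ⬝ᵥ (A - B).mulVec (A⁻¹.mulVec μ)
      ≤ μ ⬝ᵥ B⁻¹.mulVec μ := by
  set x := A⁻¹.mulVec μ with hxdef
  set y := B⁻¹.mulVec μ with hydef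
  have hAx : A.mulVec x = μ := by
    rw [hxdef, mulVec_mulVec, Matrix.mul_nonsing_inv _ hA.det_pos.ne'.isUnit, one_mulVec]
  have hBy : B.mulVec y = μ := by
    rw [hydef, mulVec_mulVec, Matrix.mul_nonsing_inv _ hB.det_pos.ne'.isUnit, one_mulVec]
  have hBT : Bᵀ = B := by
    have := hB.isHermitian
    rwa [Matrix.IsHermitian, conjTranspose_eq_transpose_of_trivial] at this
  have hBsym : ∀ u w : n → ℝ, u ⬝ᵥ B.mulVec w = w ⬝ᵥ B.mulVec u := by
    intro u w
    rw [dotProduct_mulVec, ← hBT, vecMul_transpose, hBT, dotProduct_comm]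
  have hpsd : 0 ≤ (x - y) ⬝ᵥ B.mulVec (x - y) := by
    have h := hB.posSemidef.dotProduct_mulVec_nonneg (x - y)
    have hs : star (x - y) = x - y := by funext i; simp
    rwa [hs] at h
  have expand : (x - y) ⬝ᵥ B.mulVec (x - y)
      = x ⬝ᵥ B.mulVec x - 2 * (x ⬝ᵥ B.mulVec y) + y ⬝ᵥ B.mulVec y := by
    rw [Matrix.mulVec_sub, dotProduct_sub, sub_dotProduct, sub_dotProduct, hBsym y x]
    ring
  have h1 : μ ⬝ᵥ y = y ⬝ᵥ B.mulVec y := by rw [← hBy]; exact dotProduct_comm _ _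
  have h2 : μ ⬝ᵥ x = x ⬝ᵥ A.mulVec x := by rw [← hAx]; exact dotProduct_comm _ _
  have h3 : x ⬝ᵥ B.mulVec y = x ⬝ᵥ A.mulVec x := by rw [hBy, ← hAx]
  have h4 : x ⬝ᵥ (A - B).mulVec x = x ⬝ᵥ A.mulVec x - x ⬝ᵥ B.mulVec x := by
    rw [Matrix.sub_mulVec, dotProduct_sub]
  linarith

private lemma etaSq_eq {m : Type*} [Fintype m] {r : ℕ} (R : Matrix m (Fin r) ℝ)
    {σ2 : ℝ} (hσ2 : 0 < σ2) (μ : Fin r → ℝ) :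
    etaSq R σ2 μ
      = μ ⬝ᵥ μ - σ2 * (μ ⬝ᵥ (Rᵀ * R + σ2 • (1 : Matrix (Fin r) (Fin r) ℝ))⁻¹.mulVec μ) := by
  set A := Rᵀ * R + σ2 • (1 : Matrix (Fin r) (Fin r) ℝ) with hA
  have hpd : A.PosDef := posdef_A R hσ2
  have hinv : A⁻¹ * (Rᵀ * R) = 1 - σ2 • A⁻¹ := by
    have hRR : Rᵀ * R = A - σ2 • (1 : Matrix (Fin r) (Fin r) ℝ) :=
      (add_sub_cancel_right _ _).symm
    rw [hRR, Matrix.mul_sub, Matrix.nonsing_inv_mul _ hpd.det_pos.ne'.isUnit,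
      mul_smul_comm, Matrix.mul_one]
  rw [etaSq, hinv, Matrix.sub_mulVec, one_mulVec, smul_mulVec, dotProduct_sub,
    dotProduct_smul, smul_eq_mul]

set_option maxHeartbeats 800000 in
/-- With indices partitioned into `S ⊕ C ⊕ P`, `G` real with zero
`(P, S)` block, `I - G` and `I_P - G_{PP}` invertible, `E` a real input matrix whose rows
on `C` and `P` vanish, `R = (I - G)⁻¹ E` with row restrictions `R_C`, `R_P`, cutset
transfer matrix `T = (I_P - G_{PP})⁻¹ G_{PC}`, and `σ² > 0`:
(a) if the largest singular value of `T` is at most `1` (`‖T d‖₂² ≤ ‖d‖₂²` for all `d`)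
then `η_C²(μ) ≥ η_P²(μ)` for all `μ`; (b) if the smallest singular value of `T` is
strictly greater than `1` (`‖T d‖₂² ≥ c ‖d‖₂²` for some `c > 1` and all `d`) and
`R_C μ ≠ 0`, then `η_P²(μ) > η_C²(μ)`. -/
theorem stmt15 {S C P : Type*} [Fintype S] [Fintype C] [Fintype P]
    [DecidableEq S] [DecidableEq C] [DecidableEq P] (r : ℕ)
    (G : Matrix (S ⊕ C ⊕ P) (S ⊕ C ⊕ P) ℝ)
    (hPS : ∀ (p : P) (l : S), G (Sum.inr (Sum.inr p)) (Sum.inl l) = 0)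
    (h1 : IsUnit (1 - G))
    (h2 : IsUnit ((1 : Matrix P P ℝ)
      - G.submatrix (Sum.inr ∘ Sum.inr) (Sum.inr ∘ Sum.inr)))
    (E : Matrix (S ⊕ C ⊕ P) (Fin r) ℝ)
    (hEC : ∀ (c : C) (j : Fin r), E (Sum.inr (Sum.inl c)) j = 0)
    (hEP : ∀ (p : P) (j : Fin r), E (Sum.inr (Sum.inr p)) j = 0)
    (σ2 : ℝ) (hσ2 : 0 < σ2)
    (RC : Matrix C (Fin r) ℝ) (RP : Matrix P (Fin r) ℝ) (T : Matrix P C ℝ)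
    (hRC : RC = ((1 - G)⁻¹ * E).submatrix (Sum.inr ∘ Sum.inl) id)
    (hRP : RP = ((1 - G)⁻¹ * E).submatrix (Sum.inr ∘ Sum.inr) id)
    (hT : T = ((1 : Matrix P P ℝ)
        - G.submatrix (Sum.inr ∘ Sum.inr) (Sum.inr ∘ Sum.inr))⁻¹
      * G.submatrix (Sum.inr ∘ Sum.inr) (Sum.inr ∘ Sum.inl)) :
    ((∀ d : C → ℝ, (T.mulVec d) ⬝ᵥ (T.mulVec d) ≤ d ⬝ᵥ d) →
      ∀ μ : Fin r → ℝ, etaSq RP σ2 μ ≤ etaSq RC σ2 μ) ∧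
    ((∃ c : ℝ, 1 < c ∧ ∀ d : C → ℝ, c * (d ⬝ᵥ d) ≤ (T.mulVec d) ⬝ᵥ (T.mulVec d)) →
      ∀ μ : Fin r → ℝ, RC.mulVec μ ≠ 0 → etaSq RC σ2 μ < etaSq RP σ2 μ) := by
  -- Step 1: the block relation `R_P = T * R_C`.
  have hRfull : (1 - G) * ((1 - G)⁻¹ * E) = E := by
    rw [← Matrix.mul_assoc,
      Matrix.mul_nonsing_inv _ ((Matrix.isUnit_iff_isUnit_det _).mp h1), Matrix.one_mul]
  have hblock : ((1 : Matrix P P ℝ) - G.submatrix (Sum.inr ∘ Sum.inr) (Sum.inr ∘ Sum.inr)) * RP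
      = G.submatrix (Sum.inr ∘ Sum.inr) (Sum.inr ∘ Sum.inl) * RC := by
    ext p j
    have hent := congrFun (congrFun hRfull (Sum.inr (Sum.inr p))) j
    rw [Matrix.mul_apply, hEP p j, Fintype.sum_sum_type, Fintype.sum_sum_type] at hent
    simp only [Matrix.sub_apply, Matrix.one_apply, hPS, reduceCtorEq, if_false,
      Sum.inr.injEq, Sum.inl.injEq, zero_sub, neg_mul, sub_zero, zero_mul,
      Finset.sum_const_zero, zero_add, Finset.sum_neg_distrib] at hent
    rw [Matrix.mul_apply, Matrix.mul_apply]
    simp only [hRC, hRP, Matrix.sub_apply, Matrix.one_apply, Matrix.submatrix_apply,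
      Function.comp_apply, id]
    linarith [hent]
  have hRPT : RP = T * RC := by
    rw [hT, Matrix.mul_assoc, ← hblock, ← Matrix.mul_assoc,
      Matrix.nonsing_inv_mul _ ((Matrix.isUnit_iff_isUnit_det _).mp h2), Matrix.one_mul]
  -- Step 2: abbreviations and basic facts.
  set AC := RCᵀ * RC + σ2 • (1 : Matrix (Fin r) (Fin r) ℝ) with hAC
  set AP := RPᵀ * RP + σ2 • (1 : Matrix (Fin r) (Fin r) ℝ) with hAP
  have hACpd : AC.PosDef := posdef_A RC hσ2
  have hAPpd : AP.PosDef := posdef_A RP hσ2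
  have hRPv : ∀ v : Fin r → ℝ, RP.mulVec v = T.mulVec (RC.mulVec v) := by
    intro v; rw [hRPT, ← mulVec_mulVec]
  constructor
  · -- Part (a)
    intro hTle μ
    rw [etaSq_eq RC hσ2 μ, etaSq_eq RP hσ2 μ, ← hAC, ← hAP]
    have hkey := inv_qf_ge hACpd hAPpd μ
    set x := AC⁻¹.mulVec μ with hx
    have hdiff : x ⬝ᵥ (AC - AP).mulVec x
        = (RC.mulVec x) ⬝ᵥ (RC.mulVec x) - (RP.mulVec x) ⬝ᵥ (RP.mulVec x) := by
      rw [Matrix.sub_mulVec, dotProduct_sub, hAC, hAP, qf_eq, qf_eq]; ring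
    have hle : (RP.mulVec x) ⬝ᵥ (RP.mulVec x) ≤ (RC.mulVec x) ⬝ᵥ (RC.mulVec x) := by
      rw [hRPv x]; exact hTle _
    nlinarith
  · -- Part (b)
    rintro ⟨c, hc, hTge⟩ μ hμ
    rw [etaSq_eq RC hσ2 μ, etaSq_eq RP hσ2 μ, ← hAC, ← hAP]
    have hkey := inv_qf_ge hAPpd hACpd μ
    set x := AP⁻¹.mulVec μ with hx
    have hAPx : AP.mulVec x = μ := by
      rw [hx, mulVec_mulVec, Matrix.mul_nonsing_inv _ hAPpd.det_pos.ne'.isUnit, one_mulVec]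
    have hRCx : RC.mulVec x ≠ 0 := by
      intro h0
      have hRPx : RP.mulVec x = 0 := by rw [hRPv x, h0, mulVec_zero]
      have hAPx2 : AP.mulVec x = σ2 • x := by
        rw [hAP, add_mulVec, ← mulVec_mulVec, hRPx, mulVec_zero, smul_mulVec,
          one_mulVec, zero_add]
      have hμeq : μ = σ2 • x := by rw [← hAPx, hAPx2]
      apply hμ
      rw [hμeq, mulVec_smul, h0, smul_zero]
    have hdiff : x ⬝ᵥ (AP - AC).mulVec x
        = (RP.mulVec x) ⬝ᵥ (RP.mulVec x) - (RC.mulVec x) ⬝ᵥ (RC.mulVec x) := by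
      rw [Matrix.sub_mulVec, dotProduct_sub, hAC, hAP, qf_eq, qf_eq]; ring
    have hge : c * ((RC.mulVec x) ⬝ᵥ (RC.mulVec x)) ≤ (RP.mulVec x) ⬝ᵥ (RP.mulVec x) := by
      rw [hRPv x]; exact hTge _
    have hpos : 0 < (RC.mulVec x) ⬝ᵥ (RC.mulVec x) := dot_self_pos' hRCx
    have hd : 0 < x ⬝ᵥ (AP - AC).mulVec x := by nlinarith
    have hlt : μ ⬝ᵥ x < μ ⬝ᵥ AC⁻¹.mulVec μ := by linarith
    have := mul_lt_mul_of_pos_left hlt hσ2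
    linarith
end

section
/- Let the index set of a real n×n matrix G be partitioned into disjoint sets S, C, P with the (P, S) block of G equal to zero, and assume that no eigenvalue of G and no eigenvalue of G_{PP} lies on the complex unit circle. Let E be a real n×r matrix whose rows indexed by C and by P are all zero. For z ∈ ℂ with |z| = 1 define (over ℂ) R(z) = (z·I − G)⁻¹ E, its row-restrictions R_C(z) and R_P(z) to the index sets C and P, and T(z) = (z·I_P − G_{PP})⁻¹ G_{PC}. Then: (a) if sup_{|z|=1} σ_max(T(z)) ≤ 1, then sup_{|z|=1} ‖R_P(z)‖₂ ≤ sup_{|z|=1} ‖R_C(z)‖₂; (b) if inf_{|z|=1} σ_min(T(z)) > 1, then sup_{|z|=1} ‖R_P(z)‖₂ ≥ sup_{|z|=1} ‖R_C(z)‖₂. -/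
open Matrix

section Aux
variable {𝕜 : Type*} [RCLike 𝕜] {m n p : Type*} [Fintype m] [Fintype n] [Fintype p]
    [DecidableEq n] [DecidableEq p]

lemma opNorm2_nonneg (M : Matrix m n 𝕜) : 0 ≤ opNorm2 M := norm_nonneg _

lemma toCLM_mul (M : Matrix m n 𝕜) (N : Matrix n p 𝕜) :
    LinearMap.toContinuousLinearMap (Matrix.toEuclideanLin (M * N)) =
      (LinearMap.toContinuousLinearMap (Matrix.toEuclideanLin M)).comp
        (LinearMap.toContinuousLinearMap (Matrix.toEuclideanLin N)) := by
  ext v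
  simp [Matrix.toEuclideanLin_apply, Matrix.mulVec_mulVec]

lemma opNorm2_mul_le (M : Matrix m n 𝕜) (N : Matrix n p 𝕜) :
    opNorm2 (M * N) ≤ opNorm2 M * opNorm2 N := by
  rw [opNorm2, toCLM_mul]
  exact ContinuousLinearMap.opNorm_comp_le _ _

lemma norm_toEuclideanLin_sq (M : Matrix m n 𝕜) (v : EuclideanSpace 𝕜 n) :
    ‖Matrix.toEuclideanLin M v‖ ^ 2 = ∑ i, ‖(M *ᵥ (WithLp.equiv 2 (n → 𝕜)) v) i‖ ^ 2 := by
  rw [Matrix.toEuclideanLin_apply, EuclideanSpace.norm_eq, Real.sq_sqrt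
    (Finset.sum_nonneg fun i _ => sq_nonneg _)]
  rfl

end Aux

lemma bddAbove_aux (f : ℂ → ℝ) (hf : ContinuousOn f {z : ℂ | ‖z‖ = 1}) :
    BddAbove {x : ℝ | ∃ z : ℂ, ‖z‖ = 1 ∧ x = f z} := by
  have hs : {z : ℂ | ‖z‖ = 1} = Metric.sphere (0 : ℂ) 1 := by
    ext z; simp [mem_sphere_iff_norm]
  have hc : IsCompact {z : ℂ | ‖z‖ = 1} := hs ▸ isCompact_sphere 0 1
  have himg : {x : ℝ | ∃ z : ℂ, ‖z‖ = 1 ∧ x = f z} = f '' {z : ℂ | ‖z‖ = 1} := by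
    ext x; constructor
    · rintro ⟨z, hz, rfl⟩; exact ⟨z, hz, rfl⟩
    · rintro ⟨z, hz, rfl⟩; exact ⟨z, hz, rfl⟩
  rw [himg]
  exact (hc.image_of_continuousOn hf).bddAbove

lemma continuous_opNorm2 {𝕜 : Type*} [RCLike 𝕜] {m n : Type*} [Fintype m] [Fintype n]
    [DecidableEq n] : Continuous (opNorm2 : Matrix m n 𝕜 → ℝ) := by
  have h : Continuous (fun M : Matrix m n 𝕜 =>
      LinearMap.toContinuousLinearMap (Matrix.toEuclideanLin M)) :=
    (Matrix.toEuclideanLin.trans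
      (LinearMap.toContinuousLinearMap :
        (EuclideanSpace 𝕜 n →ₗ[𝕜] EuclideanSpace 𝕜 m) ≃ₗ[𝕜] _)).toLinearMap.continuous_of_finiteDimensional
  exact continuous_norm.comp h

/-- With indices partitioned into `S ⊕ C ⊕ P`, `G` real with zero
`(P, S)` block, no eigenvalue of `G` nor of `G_{PP}` on the complex unit circle, and `E` a
real input matrix whose rows on `C` and `P` vanish, define for `|z| = 1` (over `ℂ`)
`R(z) = (z I - G)⁻¹ E` with row restrictions `R_C(z)`, `R_P(z)`, and
`T(z) = (z I_P - G_{PP})⁻¹ G_{PC}`. Then: (a) if `sup_{|z|=1} σ_max(T(z)) ≤ 1`, then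
`sup_{|z|=1} ‖R_P(z)‖₂ ≤ sup_{|z|=1} ‖R_C(z)‖₂`; (b) if `inf_{|z|=1} σ_min(T(z)) > 1`
(i.e. `‖T(z) d‖₂² ≥ c ‖d‖₂²` for some `c > 1`, all unit-modulus `z` and all `d`), then
`sup_{|z|=1} ‖R_P(z)‖₂ ≥ sup_{|z|=1} ‖R_C(z)‖₂`. -/
theorem stmt16 {S C P : Type*} [Fintype S] [Fintype C] [Fintype P]
    [DecidableEq S] [DecidableEq C] [DecidableEq P] (r : ℕ)
    (G : Matrix (S ⊕ C ⊕ P) (S ⊕ C ⊕ P) ℝ)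
    (hPS : ∀ (p : P) (l : S), G (Sum.inr (Sum.inr p)) (Sum.inl l) = 0)
    (hG : ∀ z : ℂ, ‖z‖ = 1 → z ∉ spectrum ℂ (G.map Complex.ofReal))
    (hGPP : ∀ z : ℂ, ‖z‖ = 1 →
      z ∉ spectrum ℂ ((G.map Complex.ofReal).submatrix
        (Sum.inr ∘ Sum.inr) (Sum.inr ∘ Sum.inr)))
    (E : Matrix (S ⊕ C ⊕ P) (Fin r) ℝ)
    (hEC : ∀ (c : C) (j : Fin r), E (Sum.inr (Sum.inl c)) j = 0)
    (hEP : ∀ (p : P) (j : Fin r), E (Sum.inr (Sum.inr p)) j = 0)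
    (RC : ℂ → Matrix C (Fin r) ℂ) (RP : ℂ → Matrix P (Fin r) ℂ)
    (T : ℂ → Matrix P C ℂ)
    (hRC : ∀ z : ℂ, RC z =
      (((z • (1 : Matrix (S ⊕ C ⊕ P) (S ⊕ C ⊕ P) ℂ) - G.map Complex.ofReal)⁻¹
        * E.map Complex.ofReal).submatrix (Sum.inr ∘ Sum.inl) id))
    (hRP : ∀ z : ℂ, RP z =
      (((z • (1 : Matrix (S ⊕ C ⊕ P) (S ⊕ C ⊕ P) ℂ) - G.map Complex.ofReal)⁻¹
        * E.map Complex.ofReal).submatrix (Sum.inr ∘ Sum.inr) id))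
    (hT : ∀ z : ℂ, T z =
      ((z • (1 : Matrix P P ℂ)
          - (G.map Complex.ofReal).submatrix (Sum.inr ∘ Sum.inr) (Sum.inr ∘ Sum.inr))⁻¹
        * (G.map Complex.ofReal).submatrix (Sum.inr ∘ Sum.inr) (Sum.inr ∘ Sum.inl))) :
    ((∀ z : ℂ, ‖z‖ = 1 → opNorm2 (T z) ≤ 1) →
      sSup {x : ℝ | ∃ z : ℂ, ‖z‖ = 1 ∧ x = opNorm2 (RP z)}
        ≤ sSup {x : ℝ | ∃ z : ℂ, ‖z‖ = 1 ∧ x = opNorm2 (RC z)}) ∧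
    ((∃ c : ℝ, 1 < c ∧ ∀ z : ℂ, ‖z‖ = 1 → ∀ d : C → ℂ,
        c * ∑ i, ‖d i‖ ^ 2 ≤ ∑ i, ‖(T z).mulVec d i‖ ^ 2) →
      sSup {x : ℝ | ∃ z : ℂ, ‖z‖ = 1 ∧ x = opNorm2 (RC z)}
        ≤ sSup {x : ℝ | ∃ z : ℂ, ‖z‖ = 1 ∧ x = opNorm2 (RP z)}) := by
  set Gc : Matrix (S ⊕ C ⊕ P) (S ⊕ C ⊕ P) ℂ := G.map Complex.ofReal with hGc
  set Ec : Matrix (S ⊕ C ⊕ P) (Fin r) ℂ := E.map Complex.ofReal with hEc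
  -- invertibility on the circle
  have hAunit : ∀ z : ℂ, ‖z‖ = 1 →
      IsUnit (z • (1 : Matrix (S ⊕ C ⊕ P) (S ⊕ C ⊕ P) ℂ) - Gc).det := by
    intro z hz
    have := (spectrum.notMem_iff).mp (hG z hz)
    rw [Algebra.algebraMap_eq_smul_one] at this
    exact (Matrix.isUnit_iff_isUnit_det _).mp this
  have hBunit : ∀ z : ℂ, ‖z‖ = 1 →
      IsUnit (z • (1 : Matrix P P ℂ)
        - Gc.submatrix (Sum.inr ∘ Sum.inr) (Sum.inr ∘ Sum.inr)).det := by
    intro z hz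
    have := (spectrum.notMem_iff).mp (hGPP z hz)
    rw [Algebra.algebraMap_eq_smul_one] at this
    exact (Matrix.isUnit_iff_isUnit_det _).mp this
  -- the key identity RP z = T z * RC z on the circle
  have key : ∀ z : ℂ, ‖z‖ = 1 → RP z = T z * RC z := by
    intro z hz
    set A : Matrix (S ⊕ C ⊕ P) (S ⊕ C ⊕ P) ℂ :=
      z • (1 : Matrix (S ⊕ C ⊕ P) (S ⊕ C ⊕ P) ℂ) - Gc with hA
    set B : Matrix P P ℂ := z • (1 : Matrix P P ℂ)
      - Gc.submatrix (Sum.inr ∘ Sum.inr) (Sum.inr ∘ Sum.inr) with hB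
    set R : Matrix (S ⊕ C ⊕ P) (Fin r) ℂ := A⁻¹ * Ec with hR
    have hAR : A * R = Ec := by
      rw [hR, ← Matrix.mul_assoc, Matrix.mul_nonsing_inv _ (hAunit z hz), Matrix.one_mul]
    have blockP : B * R.submatrix (Sum.inr ∘ Sum.inr) id =
        Gc.submatrix (Sum.inr ∘ Sum.inr) (Sum.inr ∘ Sum.inl)
          * R.submatrix (Sum.inr ∘ Sum.inl) id := by
      ext p j
      have h0 : ∑ k, A (Sum.inr (Sum.inr p)) k * R k j = 0 := by
        have := congrFun (congrFun hAR (Sum.inr (Sum.inr p))) j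
        rw [Matrix.mul_apply] at this
        rw [this]
        simp [hEc, hEP]
      rw [Fintype.sum_sum_type, Fintype.sum_sum_type] at h0
      have hS0 : ∀ s : S, A (Sum.inr (Sum.inr p)) (Sum.inl s) * R (Sum.inl s) j = 0 := by
        intro s
        have : A (Sum.inr (Sum.inr p)) (Sum.inl s) = 0 := by
          simp [hA, Matrix.sub_apply, Matrix.smul_apply, Matrix.one_apply, hGc,
            Matrix.map_apply, hPS]
        rw [this, zero_mul]
      rw [Finset.sum_congr rfl (fun s _ => hS0 s), Finset.sum_const_zero, zero_add] at h0
      simp only [Matrix.mul_apply, Matrix.submatrix_apply, Function.comp_apply, id]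
      have hCA : ∀ c : C, A (Sum.inr (Sum.inr p)) (Sum.inr (Sum.inl c)) =
          -(Gc (Sum.inr (Sum.inr p)) (Sum.inr (Sum.inl c))) := by
        intro c
        simp [hA, Matrix.sub_apply, Matrix.smul_apply, Matrix.one_apply]
      have hPA : ∀ p' : P, A (Sum.inr (Sum.inr p)) (Sum.inr (Sum.inr p')) =
          B p p' := by
        intro p'
        simp [hA, hB, Matrix.sub_apply, Matrix.smul_apply, Matrix.one_apply,
          Matrix.submatrix_apply, Sum.inr.injEq]
      simp only [hCA, hPA, neg_mul] at h0
      simp only [Finset.sum_neg_distrib] at h0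
      linear_combination h0
    have hRPz : RP z = R.submatrix (Sum.inr ∘ Sum.inr) id := hRP z
    have hRCz : RC z = R.submatrix (Sum.inr ∘ Sum.inl) id := hRC z
    rw [hRPz, hRCz, hT z]
    calc R.submatrix (Sum.inr ∘ Sum.inr) id
        = (B⁻¹ * B) * R.submatrix (Sum.inr ∘ Sum.inr) id := by
          rw [Matrix.nonsing_inv_mul _ (hBunit z hz), Matrix.one_mul]
      _ = B⁻¹ * (B * R.submatrix (Sum.inr ∘ Sum.inr) id) := by rw [Matrix.mul_assoc]
      _ = B⁻¹ * (Gc.submatrix (Sum.inr ∘ Sum.inr) (Sum.inr ∘ Sum.inl)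
            * R.submatrix (Sum.inr ∘ Sum.inl) id) := by rw [blockP]
      _ = (B⁻¹ * Gc.submatrix (Sum.inr ∘ Sum.inr) (Sum.inr ∘ Sum.inl))
            * R.submatrix (Sum.inr ∘ Sum.inl) id := by rw [Matrix.mul_assoc]
  -- continuity and boundedness
  have hA1 : Continuous fun z : ℂ =>
      z • (1 : Matrix (S ⊕ C ⊕ P) (S ⊕ C ⊕ P) ℂ) - Gc :=
    (continuous_id.smul continuous_const).sub continuous_const
  have hdet : ∀ z ∈ {z : ℂ | ‖z‖ = 1},
      (z • (1 : Matrix (S ⊕ C ⊕ P) (S ⊕ C ⊕ P) ℂ) - Gc).det ≠ 0 := by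
    intro z hz
    exact (hAunit z hz).ne_zero
  have hinv : ContinuousOn (fun z : ℂ =>
      (z • (1 : Matrix (S ⊕ C ⊕ P) (S ⊕ C ⊕ P) ℂ) - Gc)⁻¹) {z : ℂ | ‖z‖ = 1} := by
    have : (fun z : ℂ => (z • (1 : Matrix (S ⊕ C ⊕ P) (S ⊕ C ⊕ P) ℂ) - Gc)⁻¹) =
        fun z => ((z • (1 : Matrix (S ⊕ C ⊕ P) (S ⊕ C ⊕ P) ℂ) - Gc).det)⁻¹
          • (z • (1 : Matrix (S ⊕ C ⊕ P) (S ⊕ C ⊕ P) ℂ) - Gc).adjugate := by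
      funext z
      rw [Matrix.inv_def, Ring.inverse_eq_inv']
    rw [this]
    exact (hA1.matrix_det.continuousOn.inv₀ hdet).smul hA1.matrix_adjugate.continuousOn
  have hmul : Continuous fun M : Matrix (S ⊕ C ⊕ P) (S ⊕ C ⊕ P) ℂ => M * Ec :=
    continuous_id.matrix_mul continuous_const
  have hRCcont : ContinuousOn (fun z => opNorm2 (RC z)) {z : ℂ | ‖z‖ = 1} := by
    have : (fun z => opNorm2 (RC z)) = fun z => opNorm2
        ((((z • (1 : Matrix (S ⊕ C ⊕ P) (S ⊕ C ⊕ P) ℂ) - Gc)⁻¹ * Ec).submatrix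
          (Sum.inr ∘ Sum.inl) id)) := by
      funext z; rw [hRC z]
    rw [this]
    exact (continuous_opNorm2.comp
      ((continuous_id.matrix_submatrix _ _ : Continuous fun M :
        Matrix (S ⊕ C ⊕ P) (Fin r) ℂ => M.submatrix (Sum.inr ∘ Sum.inl) id))).comp_continuousOn
      (hmul.comp_continuousOn hinv)
  have hRPcont : ContinuousOn (fun z => opNorm2 (RP z)) {z : ℂ | ‖z‖ = 1} := by
    have : (fun z => opNorm2 (RP z)) = fun z => opNorm2
        ((((z • (1 : Matrix (S ⊕ C ⊕ P) (S ⊕ C ⊕ P) ℂ) - Gc)⁻¹ * Ec).submatrix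
          (Sum.inr ∘ Sum.inr) id)) := by
      funext z; rw [hRP z]
    rw [this]
    exact (continuous_opNorm2.comp
      ((continuous_id.matrix_submatrix _ _ : Continuous fun M :
        Matrix (S ⊕ C ⊕ P) (Fin r) ℂ => M.submatrix (Sum.inr ∘ Sum.inr) id))).comp_continuousOn
      (hmul.comp_continuousOn hinv)
  have hBddC : BddAbove {x : ℝ | ∃ z : ℂ, ‖z‖ = 1 ∧ x = opNorm2 (RC z)} :=
    bddAbove_aux _ hRCcont
  have hBddP : BddAbove {x : ℝ | ∃ z : ℂ, ‖z‖ = 1 ∧ x = opNorm2 (RP z)} :=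
    bddAbove_aux _ hRPcont
  have hone : ‖(1 : ℂ)‖ = 1 := by simp
  have hCnonneg : 0 ≤ sSup {x : ℝ | ∃ z : ℂ, ‖z‖ = 1 ∧ x = opNorm2 (RC z)} :=
    le_trans (opNorm2_nonneg (RC 1)) (le_csSup hBddC ⟨1, hone, rfl⟩)
  have hPnonneg : 0 ≤ sSup {x : ℝ | ∃ z : ℂ, ‖z‖ = 1 ∧ x = opNorm2 (RP z)} :=
    le_trans (opNorm2_nonneg (RP 1)) (le_csSup hBddP ⟨1, hone, rfl⟩)
  constructor
  · -- part (a)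
    intro hTle
    apply Real.sSup_le _ hCnonneg
    rintro x ⟨z, hz, rfl⟩
    calc opNorm2 (RP z) = opNorm2 (T z * RC z) := by rw [key z hz]
      _ ≤ opNorm2 (T z) * opNorm2 (RC z) := opNorm2_mul_le _ _
      _ ≤ 1 * opNorm2 (RC z) :=
          mul_le_mul_of_nonneg_right (hTle z hz) (opNorm2_nonneg _)
      _ = opNorm2 (RC z) := one_mul _
      _ ≤ _ := le_csSup hBddC ⟨z, hz, rfl⟩
  · -- part (b)
    rintro ⟨c, hc1, hcT⟩
    apply Real.sSup_le _ hPnonneg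
    rintro x ⟨z, hz, rfl⟩
    have hpt : opNorm2 (RC z) ≤ opNorm2 (RP z) := by
      rw [opNorm2]
      apply ContinuousLinearMap.opNorm_le_bound _ (opNorm2_nonneg (RP z))
      intro v
      have hkey2 : Matrix.toEuclideanLin (RP z) v
          = Matrix.toEuclideanLin (T z) (Matrix.toEuclideanLin (RC z) v) := by
        rw [key z hz]
        simp [Matrix.toEuclideanLin_apply, Matrix.mulVec_mulVec]
      have hsq : ‖Matrix.toEuclideanLin (RC z) v‖ ^ 2
          ≤ ‖Matrix.toEuclideanLin (RP z) v‖ ^ 2 := by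
        rw [hkey2, norm_toEuclideanLin_sq, norm_toEuclideanLin_sq]
        set d : C → ℂ := (RC z) *ᵥ (WithLp.equiv 2 ((Fin r) → ℂ)) v with hd
        have hde : (WithLp.equiv 2 (C → ℂ)) (Matrix.toEuclideanLin (RC z) v) = d := by
          simp [hd]
        rw [hde]
        have h2 := hcT z hz d
        have h3 : ∑ i, ‖d i‖ ^ 2 ≤ c * ∑ i, ‖d i‖ ^ 2 :=
          le_mul_of_one_le_left (Finset.sum_nonneg fun i _ => sq_nonneg _) hc1.le
        exact le_trans h3 h2
      have hle : ‖Matrix.toEuclideanLin (RC z) v‖ ≤ ‖Matrix.toEuclideanLin (RP z) v‖ := by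
        have := Real.sqrt_le_sqrt hsq
        rwa [Real.sqrt_sq (norm_nonneg _), Real.sqrt_sq (norm_nonneg _)] at this
      calc ‖(LinearMap.toContinuousLinearMap (Matrix.toEuclideanLin (RC z))) v‖
          = ‖Matrix.toEuclideanLin (RC z) v‖ := by
            rw [LinearMap.coe_toContinuousLinearMap']
        _ ≤ ‖Matrix.toEuclideanLin (RP z) v‖ := hle
        _ = ‖(LinearMap.toContinuousLinearMap (Matrix.toEuclideanLin (RP z))) v‖ := by
            rw [LinearMap.coe_toContinuousLinearMap']
        _ ≤ opNorm2 (RP z) * ‖v‖ :=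
            (LinearMap.toContinuousLinearMap (Matrix.toEuclideanLin (RP z))).le_opNorm v
    exact le_trans hpt (le_csSup hBddP ⟨z, hz, rfl⟩)
end
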